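/- arXiv:1101.5608 — 6 statements merged into one kernel-verified Lean document; each statement's English description precedes it below -/
import Mathlib

section
/- As formal power series in z over ℚ, if u = z/(1+z)^2 then for every k ≥ 0 one has (1+z)·z^k = Σ_{n≥k} (C(2n,n-k) − C(2n,n-k-1)) · u^n, i.e., the coefficient of u^n in (1+z)z^k (after substituting the compositional inverse of u) equals C(2n,n-k) − C(2n,n-k-1). -/
open PowerSeries

/-- Binomial coefficient with integer arguments: `0` outside `0 ≤ b ≤ a`. -/
def intChoose (a b : ℤ) : ℤ :=
  if 0 ≤ b ∧ b ≤ a then (a.toNat.choose b.toNat : ℤ) else 0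

lemma intChoose_eq (a b : ℤ) (ha : 0 ≤ a) (hb : 0 ≤ b) :
    intChoose a b = (a.toNat.choose b.toNat : ℤ) := by
  unfold intChoose
  split_ifs with h
  · rfl
  · push_neg at h
    have hba : a < b := h hb
    rw [Nat.choose_eq_zero_of_lt (by omega)]
    rfl

lemma intChoose_neg (a b : ℤ) (hb : b < 0) : intChoose a b = 0 := by
  unfold intChoose; split_ifs with h; · omega
  · rfl

lemma pascal (a b : ℤ) (ha : 0 ≤ a) :
    intChoose (a + 1) b = intChoose a b + intChoose a (b - 1) := by
  rcases lt_or_ge b 0 with hb | hb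
  · rw [intChoose_neg _ _ hb, intChoose_neg _ _ hb, intChoose_neg _ _ (by omega)]
    ring
  rcases eq_or_lt_of_le hb with hb0 | hb1
  · rw [intChoose_eq _ _ (by omega) hb, intChoose_eq _ _ ha hb,
      intChoose_neg _ _ (by omega)]
    simp [← hb0]
  · rw [intChoose_eq _ _ (by omega) hb, intChoose_eq _ _ ha hb,
      intChoose_eq _ _ ha (by omega)]
    have h1 : (a + 1).toNat = a.toNat + 1 := by omega
    have h2 : b.toNat = (b - 1).toNat + 1 := by omega
    rw [h1, h2, Nat.choose_succ_succ]
    push_cast; ring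

lemma pascal2 (a b : ℤ) (ha : 0 ≤ a) :
    intChoose (a + 2) b
      = intChoose a b + 2 * intChoose a (b - 1) + intChoose a (b - 2) := by
  rw [show a + 2 = (a + 1) + 1 by ring, pascal _ _ (by omega), pascal a b ha,
    pascal a (b - 1) ha, show b - 1 - 1 = b - 2 by ring]
  ring

lemma intChoose_symm (a b : ℤ) (ha : 0 ≤ a) :
    intChoose a b = intChoose a (a - b) := by
  rcases lt_or_ge b 0 with hb | hb
  · rw [intChoose_neg _ _ hb]
    unfold intChoose; split_ifs with h <;> [omega; rfl]
  rcases le_or_gt b a with hba | hba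
  · rw [intChoose_eq _ _ ha hb, intChoose_eq _ _ ha (by omega)]
    have : (a - b).toNat = a.toNat - b.toNat := by omega
    rw [this, Nat.choose_symm (by omega)]
  · rw [intChoose_neg a (a - b) (by omega)]
    unfold intChoose; split_ifs with h <;> [omega; rfl]

/-- The ballot-type coefficients. -/
def cc (n : ℕ) (k : ℤ) : ℤ :=
  intChoose (2 * n) ((n : ℤ) - k) - intChoose (2 * n) ((n : ℤ) - k - 1)

lemma crec (n : ℕ) (k : ℤ) :
    cc (n + 1) k = cc n (k - 1) + 2 * cc n k + cc n (k + 1) := by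
  unfold cc
  have P : ∀ b : ℤ, intChoose (2 * ((n : ℤ) + 1)) b
      = intChoose (2 * n) b + 2 * intChoose (2 * n) (b - 1)
        + intChoose (2 * n) (b - 2) := by
    intro b
    rw [show (2 : ℤ) * ((n : ℤ) + 1) = 2 * n + 2 by ring]
    exact pascal2 _ b (by positivity)
  push_cast
  rw [P, P]
  ring_nf

lemma cneg (n : ℕ) : cc n (-1) = -(cc n 0) := by
  unfold cc
  have h1 : intChoose (2 * n) ((n : ℤ) - (-1)) = intChoose (2 * n) ((n : ℤ) - 1) := by
    rw [intChoose_symm _ _ (by positivity), show (2 * (n:ℤ) - ((n:ℤ) - (-1))) = (n:ℤ) - 1 by ring]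
  rw [h1, show ((n : ℤ) - (-1) - 1) = (n : ℤ) - 0 by ring]
  ring_nf

lemma cc_zero_zero : cc 0 0 = 1 := by decide

lemma cc_zero_succ (k : ℕ) : cc 0 ((k : ℤ) + 1) = 0 := by
  unfold cc
  rw [intChoose_neg _ _ (by push_cast; omega), intChoose_neg _ _ (by push_cast; omega)]
  ring

noncomputable def Sser (m : ℕ) (k : ℤ) : PowerSeries ℚ :=
  ∑ n ∈ Finset.range (m + 1),
    PowerSeries.C ((cc n k : ℚ)) * (PowerSeries.X * ((1 + PowerSeries.X) ^ 2)⁻¹) ^ n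

lemma hU : ((1 + X : PowerSeries ℚ) ^ 2) * ((1 + X : PowerSeries ℚ) ^ 2)⁻¹ = 1 :=
  PowerSeries.mul_inv_cancel _ (by simp)

lemma Sneg (m : ℕ) : Sser m (-1) = -Sser m 0 := by
  unfold Sser
  rw [← Finset.sum_neg_distrib]
  refine Finset.sum_congr rfl fun n _ => ?_
  rw [cneg]; push_cast; rw [map_neg]; ring

lemma Ssucc (m : ℕ) (k : ℤ) :
    Sser (m + 1) k = PowerSeries.C ((cc 0 k : ℚ))
      + (PowerSeries.X * ((1 + PowerSeries.X) ^ 2)⁻¹)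
        * (Sser m (k - 1) + 2 * Sser m k + Sser m (k + 1)) := by
  unfold Sser
  rw [Finset.sum_range_succ']
  have h : ∀ n : ℕ,
      PowerSeries.C ((cc (n + 1) k : ℚ)) * (PowerSeries.X * ((1 + PowerSeries.X) ^ 2)⁻¹) ^ (n + 1)
        = (PowerSeries.X * ((1 + PowerSeries.X) ^ 2)⁻¹)
          * (PowerSeries.C ((cc n (k - 1) : ℚ)) * (PowerSeries.X * ((1 + PowerSeries.X) ^ 2)⁻¹) ^ n
            + 2 * (PowerSeries.C ((cc n k : ℚ)) * (PowerSeries.X * ((1 + PowerSeries.X) ^ 2)⁻¹) ^ n)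
            + PowerSeries.C ((cc n (k + 1) : ℚ)) * (PowerSeries.X * ((1 + PowerSeries.X) ^ 2)⁻¹) ^ n) := by
    intro n
    rw [crec]; push_cast
    rw [map_add, map_add, map_mul, map_ofNat]
    ring
  rw [Finset.sum_congr rfl fun n _ => h n, ← Finset.mul_sum]
  rw [Finset.sum_add_distrib, Finset.sum_add_distrib, ← Finset.mul_sum]
  simp only [pow_zero, mul_one]
  ring

lemma main (m : ℕ) : ∀ k : ℕ,
    (X : PowerSeries ℚ) ^ (m + 1) ∣ ((1 + X) * X ^ k - Sser m k) := by
  induction m with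
  | zero =>
    intro k
    rw [pow_one, PowerSeries.X_dvd_iff]
    have hS : Sser 0 (k : ℤ) = PowerSeries.C ((cc 0 k : ℚ)) := by
      simp [Sser]
    rw [hS, map_sub, map_mul, map_add, map_one, map_pow, constantCoeff_X, constantCoeff_C]
    cases k with
    | zero => simp [cc_zero_zero]
    | succ k' =>
      have h1 : cc 0 ((k' : ℤ) + 1) = 0 := cc_zero_succ k'
      have h2 : ((k' + 1 : ℕ) : ℤ) = (k' : ℤ) + 1 := by push_cast; ring
      rw [h2, h1]
      simp [zero_pow]
  | succ m ih =>
    intro k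
    cases k with
    | zero =>
      obtain ⟨Y0, h0⟩ := ih 0
      obtain ⟨Y1, h1⟩ := ih 1
      rw [Nat.cast_zero] at h0
      rw [Nat.cast_one] at h1
      rw [Nat.cast_zero]
      have key : (1 + X) * X ^ 0 - Sser (m + 1) 0
          = (PowerSeries.X * ((1 + PowerSeries.X) ^ 2)⁻¹)
            * (((1 + X) * X ^ 0 - Sser m 0) + ((1 + X) * X ^ 1 - Sser m 1)) := by
        rw [Ssucc, show (0 : ℤ) - 1 = -1 by ring, Sneg, show (0 : ℤ) + 1 = 1 by ring,
          cc_zero_zero]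
        simp only [Int.cast_one, map_one]
        linear_combination (-(X : PowerSeries ℚ)) * hU
      rw [key, h0, h1]
      exact ⟨((1 + X) ^ 2)⁻¹ * (Y0 + Y1), by ring⟩
    | succ k' =>
      obtain ⟨Y1, h1⟩ := ih k'
      obtain ⟨Y2, h2⟩ := ih (k' + 1)
      obtain ⟨Y3, h3⟩ := ih (k' + 2)
      have key : (1 + X) * X ^ (k' + 1) - Sser (m + 1) ((k' : ℤ) + 1)
          = (PowerSeries.X * ((1 + PowerSeries.X) ^ 2)⁻¹)
            * (((1 + X) * X ^ k' - Sser m k')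
              + 2 * ((1 + X) * X ^ (k' + 1) - Sser m ((k' : ℤ) + 1))
              + ((1 + X) * X ^ (k' + 2) - Sser m ((k' : ℤ) + 2))) := by
        rw [Ssucc, show ((k' : ℤ) + 1) - 1 = (k' : ℤ) by ring,
          show ((k' : ℤ) + 1) + 1 = (k' : ℤ) + 2 by ring, cc_zero_succ k']
        simp only [Int.cast_zero, map_zero]
        linear_combination (-((1 + X : PowerSeries ℚ) * X ^ (k' + 1))) * hU
      have hS2 : Sser m (((k' : ℕ) + 1 : ℕ) : ℤ) = Sser m ((k' : ℤ) + 1) := by norm_cast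
      have hS3 : Sser m (((k' : ℕ) + 2 : ℕ) : ℤ) = Sser m ((k' : ℤ) + 2) := by norm_cast
      rw [hS2] at h2
      rw [hS3] at h3
      have goal_eq : Sser (m + 1) (((k' : ℕ) + 1 : ℕ) : ℤ) = Sser (m + 1) ((k' : ℤ) + 1) := by
        norm_cast
      rw [goal_eq, key, h1, h2, h3]
      exact ⟨((1 + X) ^ 2)⁻¹ * (Y1 + 2 * Y2 + Y3), by ring⟩

/-- With `u = z/(1+z)²` in `ℚ⟦z⟧`, for every `k ≥ 0`,
`(1+z)·z^k = Σ_{n≥k} (C(2n,n-k) − C(2n,n-k-1)) uⁿ`, the sum being understood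
coefficientwise (the term `uⁿ` has order `≥ n`, so only `n ≤ m` contribute to the
coefficient of `z^m`). -/
theorem stmt2 (k : ℕ) :
    ∀ m : ℕ,
      (PowerSeries.coeff (R := ℚ) m) ((1 + PowerSeries.X) * PowerSeries.X ^ k)
        = ∑ n ∈ Finset.range (m + 1),
            ((intChoose (2 * n) ((n : ℤ) - k) - intChoose (2 * n) ((n : ℤ) - k - 1) : ℤ) : ℚ)
              * (PowerSeries.coeff (R := ℚ) m)
                  ((PowerSeries.X * ((1 + PowerSeries.X : PowerSeries ℚ) ^ 2)⁻¹) ^ n) := by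
  intro m
  have h := (PowerSeries.X_pow_dvd_iff.mp (main m k)) m (Nat.lt_succ_self m)
  rw [map_sub] at h
  have hR : ∑ n ∈ Finset.range (m + 1),
      ((intChoose (2 * n) ((n : ℤ) - k) - intChoose (2 * n) ((n : ℤ) - k - 1) : ℤ) : ℚ)
        * (PowerSeries.coeff (R := ℚ) m)
            ((PowerSeries.X * ((1 + PowerSeries.X : PowerSeries ℚ) ^ 2)⁻¹) ^ n)
      = (PowerSeries.coeff (R := ℚ) m) (Sser m k) := by
    rw [Sser, map_sum]
    refine Finset.sum_congr rfl fun n _ => ?_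
    rw [PowerSeries.coeff_C_mul]
    rfl
  rw [hR]
  linarith [h]
end

section
/- The matrix inversion relation: if two sequences (a_n) and (b_n) in a commutative ring satisfy a_n = Σ_{k=0}^n (-1)^{n-k} C(n+k, n-k) b_k for all n ≥ 0, then b_n = Σ_{k=0}^n (C(2n, n-k) − C(2n, n-k-1)) a_k for all n ≥ 0. -/
lemma B_eq (M K s : ℕ) (h : K + 1 ≤ M) :
    (∑ i ∈ Finset.range (s+1),
      (-1:ℤ)^i * (M.choose (s-i)) * ((K+i).choose i)) = ((M - K - 1).choose s : ℤ) := by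
  induction K generalizing s with
  | zero =>
    induction s with
    | zero => simp
    | succ s ih =>
      rw [Finset.sum_range_succ']
      have hterm : ∀ i : ℕ, (-1:ℤ)^(i+1) * (M.choose (s+1-(i+1))) * ((0+(i+1)).choose (i+1))
          = -((-1:ℤ)^i * (M.choose (s-i)) * ((0+i).choose i)) := by
        intro i
        simp only [Nat.succ_sub_succ, Nat.zero_add, Nat.choose_self, pow_succ]
        ring
      rw [Finset.sum_congr rfl (fun i _ => hterm i), Finset.sum_neg_distrib, ih]
      obtain ⟨m, rfl⟩ : ∃ m, M = m + 1 := ⟨M - 1, by omega⟩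
      have hp : ((m+1).choose (s+1) : ℤ) = (m.choose s : ℤ) + (m.choose (s+1) : ℤ) := by
        exact_mod_cast Nat.choose_succ_succ m s
      simp only [Nat.add_sub_cancel, Nat.sub_zero, pow_zero, Nat.zero_add, Nat.choose_self,
        Nat.choose_zero_right, Nat.cast_one, one_mul, mul_one] at *
      omega
  | succ K ihK =>
    induction s with
    | zero => simp
    | succ s ih =>
      have hrec : (∑ i ∈ Finset.range (s+2),
          (-1:ℤ)^i * (M.choose (s+1-i)) * ((K+1+i).choose i))
          = (∑ i ∈ Finset.range (s+2), (-1:ℤ)^i * (M.choose (s+1-i)) * ((K+i).choose i))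
            - ∑ i ∈ Finset.range (s+1), (-1:ℤ)^i * (M.choose (s-i)) * ((K+1+i).choose i) := by
        rw [Finset.sum_range_succ', Finset.sum_range_succ' (n := s+1)
          (f := fun i => (-1:ℤ)^i * (M.choose (s+1-i)) * ((K+i).choose i))]
        have hterm : ∀ i : ℕ,
            (-1:ℤ)^(i+1) * (M.choose (s+1-(i+1))) * ((K+1+(i+1)).choose (i+1))
            = (-1:ℤ)^(i+1) * (M.choose (s+1-(i+1))) * ((K+(i+1)).choose (i+1))
              - (-1:ℤ)^i * (M.choose (s-i)) * ((K+1+i).choose i) := by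
          intro i
          have hp : (K+1+(i+1)).choose (i+1) = (K+1+i).choose i + (K+1+i).choose (i+1) := by
            rw [show K+1+(i+1) = (K+1+i)+1 by omega]
            exact Nat.choose_succ_succ _ _
          have h2 : K + (i+1) = K + 1 + i := by omega
          rw [hp, h2]
          simp only [Nat.succ_sub_succ, pow_succ]
          push_cast
          ring
        rw [Finset.sum_congr rfl (fun i _ => hterm i), Finset.sum_sub_distrib]
        simp only [Nat.choose_zero_right, Nat.cast_one, mul_one, one_mul]
        ring
      rw [hrec, ih, ihK (s+1) (by omega)]
      have h1 : M - K - 1 = (M - (K+1) - 1) + 1 := by omega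
      have hp : ((M-K-1).choose (s+1) : ℤ)
          = ((M-(K+1)-1).choose s : ℤ) + ((M-(K+1)-1).choose (s+1) : ℤ) := by
        rw [h1]; exact_mod_cast Nat.choose_succ_succ _ _
      omega

lemma intChoose_nat (a b : ℕ) (h : b ≤ a) :
    intChoose (a : ℤ) (b : ℤ) = (a.choose b : ℤ) := by
  have : (0:ℤ) ≤ (b:ℤ) ∧ (b:ℤ) ≤ (a:ℤ) := ⟨Int.ofNat_nonneg b, by exact_mod_cast h⟩
  simp [intChoose, this]

lemma key (n m : ℕ) (hm : m ≤ n) :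
    (∑ k ∈ Finset.Ico m (n+1),
      (intChoose (2 * (n:ℤ)) ((n:ℤ) - k) - intChoose (2 * (n:ℤ)) ((n:ℤ) - k - 1)) *
        ((-1:ℤ)^(k-m) * intChoose ((k:ℤ) + m) ((k:ℤ) - m)))
    = if m = n then 1 else 0 := by
  rcases eq_or_lt_of_le hm with rfl | hlt
  · rw [if_pos rfl]
    rw [Nat.Ico_succ_singleton, Finset.sum_singleton]
    have h1 : (m:ℤ) - m - 1 = -1 := by ring
    rw [h1, sub_self]
    simp [intChoose]
  · rw [if_neg (by omega)]
    obtain ⟨t, rfl⟩ : ∃ t, n = m + t + 1 := ⟨n - m - 1, by omega⟩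
    rw [Finset.sum_Ico_eq_sum_range, show m + t + 1 + 1 - m = t + 2 by omega]
    have hconv : ∀ i ∈ Finset.range (t+2),
        (intChoose (2 * ((m+t+1 : ℕ):ℤ)) (((m+t+1:ℕ):ℤ) - ((m+i:ℕ):ℤ)) -
          intChoose (2 * ((m+t+1:ℕ):ℤ)) (((m+t+1:ℕ):ℤ) - ((m+i:ℕ):ℤ) - 1)) *
          ((-1:ℤ)^((m+i)-m) * intChoose (((m+i:ℕ):ℤ) + ((m:ℕ):ℤ)) (((m+i:ℕ):ℤ) - ((m:ℕ):ℤ)))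
        = (-1:ℤ)^i * ((2*(m+t+1)).choose (t+1-i)) * ((2*m+i).choose i)
          - intChoose (2 * ((m+t+1:ℕ):ℤ)) ((t:ℤ) - i) * ((-1:ℤ)^i * ((2*m+i).choose i)) := by
      intro i hi
      have hi' : i ≤ t + 1 := by simpa [Nat.lt_succ_iff] using hi
      have e3 : ((m+t+1:ℕ):ℤ) - ((m+i:ℕ):ℤ) - 1 = (t:ℤ) - i := by push_cast; ring
      have e1 : ((m+t+1:ℕ):ℤ) - ((m+i:ℕ):ℤ) = ((t+1-i : ℕ):ℤ) := by push_cast; omega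
      have e2 : 2 * ((m+t+1:ℕ):ℤ) = ((2*(m+t+1) : ℕ):ℤ) := by push_cast; ring
      have e4 : ((m+i:ℕ):ℤ) + ((m:ℕ):ℤ) = ((2*m+i : ℕ):ℤ) := by push_cast; ring
      have e5 : ((m+i:ℕ):ℤ) - ((m:ℕ):ℤ) = ((i:ℕ):ℤ) := by push_cast; ring
      have e6 : (m+i) - m = i := by omega
      rw [e3, e1, e2, e4, e5, e6,
        intChoose_nat _ _ (by omega), intChoose_nat _ _ (by omega)]
      ring
    rw [Finset.sum_congr rfl hconv, Finset.sum_sub_distrib]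
    have hB1 : (∑ i ∈ Finset.range (t+2),
        (-1:ℤ)^i * ((2*(m+t+1)).choose (t+1-i)) * ((2*m+i).choose i))
        = ((2*(m+t+1) - 2*m - 1).choose (t+1) : ℤ) := B_eq _ _ _ (by omega)
    have hB2 : (∑ i ∈ Finset.range (t+2),
        intChoose (2 * ((m+t+1:ℕ):ℤ)) ((t:ℤ) - i) * ((-1:ℤ)^i * ((2*m+i).choose i)))
        = ((2*(m+t+1) - 2*m - 1).choose t : ℤ) := by
      rw [Finset.sum_range_succ]
      have hlast : intChoose (2 * ((m+t+1:ℕ):ℤ)) ((t:ℤ) - ((t+1:ℕ):ℤ)) = 0 := by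
        have h9 : (t:ℤ) - ((t+1:ℕ):ℤ) = -1 := by push_cast; ring
        rw [h9]
        simp [intChoose]
      rw [hlast, zero_mul, add_zero]
      have hconv2 : ∀ i ∈ Finset.range (t+1),
          intChoose (2 * ((m+t+1:ℕ):ℤ)) ((t:ℤ) - i) * ((-1:ℤ)^i * ((2*m+i).choose i))
          = (-1:ℤ)^i * ((2*(m+t+1)).choose (t-i)) * ((2*m+i).choose i) := by
        intro i hi
        have hi' : i ≤ t := by simpa [Nat.lt_succ_iff] using hi
        have e1 : (t:ℤ) - i = ((t-i : ℕ):ℤ) := by push_cast [hi']; ring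
        have e2 : 2 * ((m+t+1:ℕ):ℤ) = ((2*(m+t+1) : ℕ):ℤ) := by push_cast; ring
        rw [e1, e2, intChoose_nat _ _ (by omega)]
        ring
      rw [Finset.sum_congr rfl hconv2]
      exact B_eq _ _ _ (by omega)
    rw [hB1, hB2, show 2*(m+t+1) - 2*m - 1 = 2*t+1 by omega]
    rw [Nat.choose_symm_half t]
    ring

theorem stmt3 {R : Type*} [CommRing R] (a b : ℕ → R)
    (h : ∀ n : ℕ, a n = ∑ k ∈ Finset.range (n + 1),
        ((-1 : R) ^ (n - k)) * ((intChoose ((n : ℤ) + k) ((n : ℤ) - k) : ℤ) : R) * b k) :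
    ∀ n : ℕ, b n = ∑ k ∈ Finset.range (n + 1),
        ((intChoose (2 * n) ((n : ℤ) - k) - intChoose (2 * n) ((n : ℤ) - k - 1) : ℤ) : R)
          * a k := by
  intro n
  symm
  calc ∑ k ∈ Finset.range (n + 1),
        ((intChoose (2 * n) ((n : ℤ) - k) - intChoose (2 * n) ((n : ℤ) - k - 1) : ℤ) : R) * a k
      = ∑ k ∈ Finset.range (n + 1), ∑ j ∈ Finset.range (k + 1),
          ((intChoose (2 * n) ((n : ℤ) - k) - intChoose (2 * n) ((n : ℤ) - k - 1) : ℤ) : R) *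
            (((-1 : R) ^ (k - j)) * ((intChoose ((k : ℤ) + j) ((k : ℤ) - j) : ℤ) : R) * b j) := by
        refine Finset.sum_congr rfl fun k _ => ?_
        rw [h k, Finset.mul_sum]
    _ = ∑ j ∈ Finset.range (n + 1), ∑ k ∈ Finset.Ico j (n + 1),
          ((intChoose (2 * n) ((n : ℤ) - k) - intChoose (2 * n) ((n : ℤ) - k - 1) : ℤ) : R) *
            (((-1 : R) ^ (k - j)) * ((intChoose ((k : ℤ) + j) ((k : ℤ) - j) : ℤ) : R) * b j) := by
        simp only [Finset.range_eq_Ico]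
        exact (Finset.sum_Ico_Ico_comm 0 (n + 1) fun i j => _).symm
    _ = ∑ j ∈ Finset.range (n + 1), (if j = n then (1:R) else 0) * b j := by
        refine Finset.sum_congr rfl fun j hj => ?_
        have hj' : j ≤ n := by
          simp only [Finset.mem_range, Nat.lt_succ_iff] at hj; exact hj
        have hfac : ∀ k : ℕ, ((intChoose (2 * n) ((n : ℤ) - k) - intChoose (2 * n) ((n : ℤ) - k - 1) : ℤ) : R) *
            (((-1 : R) ^ (k - j)) * ((intChoose ((k : ℤ) + j) ((k : ℤ) - j) : ℤ) : R) * b j)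
            = (((intChoose (2 * (n:ℤ)) ((n : ℤ) - k) - intChoose (2 * (n:ℤ)) ((n : ℤ) - k - 1)) *
                ((-1:ℤ) ^ (k - j) * intChoose ((k : ℤ) + j) ((k : ℤ) - j)) : ℤ) : R) * b j := by
          intro k
          push_cast
          ring
        rw [Finset.sum_congr rfl (fun k _ => hfac k), ← Finset.sum_mul, ← Int.cast_sum,
          key n j hj']
        simp
    _ = b n := by
        simp
end

section
/- Let OP_k be the set of overpartitions whose underlying partition fits inside the staircase δ_{k-1} = (k-1, k-2, ..., 1). Then Σ_{μ ∈ OP_k} (-1)^{s(μ)} q^{|μ|} = 1, where s(μ) is the number of overlined parts. -/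
/-- An overpartition whose underlying partition fits inside the staircase
`δ_{k-1} = (k-1, k-2, …, 1)`: a weakly decreasing list of positive parts with
`i`-th part (1-indexed) at most `k - i`, together with a set of overlined part
sizes, which must be sizes actually occurring. -/
structure Overpartition (k : ℕ) where
  /-- the parts, in weakly decreasing order -/
  parts : List ℕ
  sorted : parts.Pairwise (· ≥ ·)
  pos : ∀ p ∈ parts, 0 < p
  fits : ∀ i : ℕ, ∀ h : i < parts.length, parts.get ⟨i, h⟩ + i + 1 ≤ k
  /-- the set of overlined part sizes -/
  overlined : Finset ℕ
  overSub : ∀ p ∈ overlined, p ∈ parts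

namespace Overpartition

variable {k : ℕ}

lemma ext' {μ ν : Overpartition k} (h1 : μ.parts = ν.parts) (h2 : μ.overlined = ν.overlined) :
    μ = ν := by
  cases μ; cases ν; simp_all

lemma length_le (μ : Overpartition k) : μ.parts.length ≤ k := by
  rcases Nat.eq_zero_or_pos μ.parts.length with h | h
  · omega
  · have := μ.fits (μ.parts.length - 1) (by omega)
    omega

lemma mem_lt (μ : Overpartition k) {p : ℕ} (hp : p ∈ μ.parts) : p < k := by
  obtain ⟨i, hi, rfl⟩ := List.mem_iff_get.mp hp
  have := μ.fits i i.isLt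
  simp only [Fin.eta] at this
  omega

lemma getD_lt (μ : Overpartition k) (i : ℕ) : μ.parts.getD i k < k + 1 := by
  rcases Nat.lt_or_ge i μ.parts.length with h | h
  · rw [List.getD_eq_getElem _ _ h]
    exact Nat.lt_succ_of_lt (μ.mem_lt (List.getElem_mem h))
  · rw [List.getD_eq_default _ _ h]
    exact Nat.lt_succ_self k

noncomputable instance : Fintype (Overpartition k) := by
  apply Fintype.ofInjective
    (fun μ : Overpartition k =>
      ((fun i : Fin k => (⟨μ.parts.getD i k, μ.getD_lt i⟩ : Fin (k + 1)),
        fun i : Fin k => decide ((i : ℕ) ∈ μ.overlined)) :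
        (Fin k → Fin (k + 1)) × (Fin k → Bool)))
  intro μ ν h
  rw [Prod.mk.injEq] at h
  obtain ⟨h1, h2⟩ := h
  have hgd : ∀ i : ℕ, i < k → μ.parts.getD i k = ν.parts.getD i k := by
    intro i hi
    have := congrFun h1 ⟨i, hi⟩
    simpa using this
  have hparts : μ.parts = ν.parts := by
    apply List.ext_getElem?
    intro i
    rcases Nat.lt_or_ge i k with hik | hik
    · rcases Nat.lt_or_ge i μ.parts.length with hμ | hμ <;>
        rcases Nat.lt_or_ge i ν.parts.length with hν | hν
      · have := hgd i hik
        rw [List.getD_eq_getElem _ _ hμ, List.getD_eq_getElem _ _ hν] at this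
        rw [List.getElem?_eq_getElem hμ, List.getElem?_eq_getElem hν, this]
      · exfalso
        have heq := hgd i hik
        rw [List.getD_eq_getElem _ _ hμ, List.getD_eq_default _ _ hν] at heq
        have hm := μ.mem_lt (List.getElem_mem hμ)
        omega
      · exfalso
        have heq := hgd i hik
        rw [List.getD_eq_default _ _ hμ, List.getD_eq_getElem _ _ hν] at heq
        have hm := ν.mem_lt (List.getElem_mem hν)
        omega
      · rw [List.getElem?_eq_none hμ, List.getElem?_eq_none hν]
    · rw [List.getElem?_eq_none (le_trans μ.length_le hik),
        List.getElem?_eq_none (le_trans ν.length_le hik)]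
  have hover : μ.overlined = ν.overlined := by
    ext p
    rcases Nat.lt_or_ge p k with hp | hp
    · have := congrFun h2 ⟨p, hp⟩
      simpa using this
    · constructor <;> intro hmem
      · exact absurd (μ.mem_lt (μ.overSub p hmem)) (by omega)
      · exact absurd (ν.mem_lt (ν.overSub p hmem)) (by omega)
  exact ext' hparts hover

end Overpartition

namespace Overpartition

/-- the empty overpartition -/
def emptyOP (k : ℕ) : Overpartition k :=
  ⟨[], List.Pairwise.nil, by simp, fun i h => absurd h (by simp), ∅, by simp⟩

lemma eq_empty {μ : Overpartition k} (h : μ.parts = []) : μ = emptyOP k := by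
  apply ext' h
  apply Finset.eq_empty_of_forall_notMem
  intro p hp
  have := μ.overSub p hp
  rw [h] at this
  simp at this

/-- toggle the overline on the largest part -/
def toggle (μ : Overpartition k) (h : μ.parts ≠ []) : Overpartition k :=
  { μ with
    overlined := if μ.parts.head h ∈ μ.overlined then μ.overlined.erase (μ.parts.head h)
            else insert (μ.parts.head h) μ.overlined
    overSub := by
      intro p hp
      split_ifs at hp with hmem
      · exact μ.overSub p (Finset.mem_of_mem_erase hp)
      · rcases Finset.mem_insert.mp hp with rfl | hp
        · exact List.head_mem h
        · exact μ.overSub p hp }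

@[simp] lemma toggle_parts (μ : Overpartition k) (h : μ.parts ≠ []) :
    (μ.toggle h).parts = μ.parts := rfl

lemma toggle_toggle (μ : Overpartition k) (h : μ.parts ≠ []) (h' : (μ.toggle h).parts ≠ []) :
    (μ.toggle h).toggle h' = μ := by
  refine ext' rfl ?_
  simp only [toggle]
  by_cases hmem : μ.parts.head h ∈ μ.overlined
  · simp [hmem, Finset.insert_erase hmem]
  · simp [hmem, Finset.erase_insert hmem]

lemma toggle_ne (μ : Overpartition k) (h : μ.parts ≠ []) : μ.toggle h ≠ μ := by
  intro heq
  have : (μ.toggle h).overlined = μ.overlined := by rw [heq]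
  by_cases hmem : μ.parts.head h ∈ μ.overlined
  · simp only [toggle, hmem, if_pos] at this
    exact (Finset.notMem_erase _ _) (this ▸ hmem)
  · simp only [toggle, hmem, if_neg, not_false_iff] at this
    exact hmem (this ▸ Finset.mem_insert_self _ _)

end Overpartition


/-- `Σ_{μ ∈ OP_k} (-1)^{s(μ)} q^{|μ|} = 1` where `s(μ)` is the number of overlined
parts and `|μ|` the sum of the parts.  (The type `Overpartition k` is finite, and
the sum is expressed with `finsum`.) -/
theorem stmt5 (k : ℕ) :
    ∑ᶠ μ : Overpartition k,
        ((-1 : Polynomial ℤ) ^ μ.overlined.card * Polynomial.X ^ (μ.parts.sum))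
      = 1 := by
  classical
  rw [finsum_eq_sum_of_fintype]
  have hmem : Overpartition.emptyOP k ∈ (Finset.univ : Finset (Overpartition k)) :=
    Finset.mem_univ _
  rw [← Finset.add_sum_erase _ _ hmem]
  have h0 : ((-1 : Polynomial ℤ) ^ (Overpartition.emptyOP k).overlined.card *
      Polynomial.X ^ (Overpartition.emptyOP k).parts.sum) = 1 := by
    simp [Overpartition.emptyOP]
  rw [h0]
  have hne : ∀ μ : Overpartition k, μ ∈ Finset.univ.erase (Overpartition.emptyOP k) →
      μ.parts ≠ [] := by
    intro μ hμ hemp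
    exact (Finset.mem_erase.mp hμ).1 (Overpartition.eq_empty hemp)
  have hzero :
      ∑ x ∈ Finset.univ.erase (Overpartition.emptyOP k),
        ((-1 : Polynomial ℤ) ^ x.overlined.card * Polynomial.X ^ x.parts.sum) = 0 := by
    refine Finset.sum_involution (fun μ hμ => μ.toggle (hne μ hμ)) ?_ ?_
      (fun μ hμ => ?_) (fun μ hμ => Overpartition.toggle_toggle μ _ _)
    · intro μ hμ
      have hx : (μ.toggle (hne μ hμ)).parts.sum = μ.parts.sum := by
        rw [Overpartition.toggle_parts]
      rw [hx]
      by_cases hmem2 : μ.parts.head (hne μ hμ) ∈ μ.overlined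
      · have hcard : (μ.toggle (hne μ hμ)).overlined.card = μ.overlined.card - 1 := by
          simp [Overpartition.toggle, hmem2, Finset.card_erase_of_mem]
        have hcpos : 1 ≤ μ.overlined.card := Finset.card_pos.mpr ⟨_, hmem2⟩
        rw [hcard]
        have : (-1 : Polynomial ℤ) ^ μ.overlined.card = -(-1) ^ (μ.overlined.card - 1) := by
          conv_lhs => rw [show μ.overlined.card = (μ.overlined.card - 1) + 1 by omega]
          rw [pow_succ]; ring
        rw [this]; ring
      · have hcard : (μ.toggle (hne μ hμ)).overlined.card = μ.overlined.card + 1 := by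
          simp [Overpartition.toggle, hmem2, Finset.card_insert_of_notMem]
        rw [hcard, pow_succ]; ring
    · intro μ hμ _
      exact Overpartition.toggle_ne μ (hne μ hμ)
    · rw [Finset.mem_erase]
      refine ⟨?_, Finset.mem_univ _⟩
      intro heq
      have h2 := congrArg Overpartition.parts heq
      simp only [Overpartition.toggle_parts, Overpartition.emptyOP] at h2
      exact hne μ hμ h2
  rw [hzero, add_zero]
end

section
/- Let H(z) = Σ_{k≥0} z^k Σ_{j=-k}^{k} y^j q^{k(k+1)-j^2}, viewed as a formal power series in z with coefficients Laurent polynomials in y, q. Then H satisfies the functional equation H(z) = 1/(1−yqz) + 1/(1−y^{-1}qz) − 1 + z q^2 H(z q^2). -/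
open PowerSeries

lemma geom_inv {K : Type*} [Field K] (a : K) :
    (1 - PowerSeries.C (R := K) a * PowerSeries.X)⁻¹ = PowerSeries.mk fun n => a ^ n := by
  symm
  rw [PowerSeries.eq_inv_iff_mul_eq_one]
  · ext n
    have : (PowerSeries.mk fun n => a ^ n) * (1 - PowerSeries.C (R := K) a * PowerSeries.X)
        = PowerSeries.mk (fun n => a ^ n)
          - PowerSeries.C (R := K) a * (PowerSeries.X * PowerSeries.mk fun n => a ^ n) := by
      ring
    rw [this]
    cases n with
    | zero => simp
    | succ m => simp [PowerSeries.coeff_succ_X_mul, pow_succ, mul_comm]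
  · simp

/-- The series `H(z) = Σ_{k≥0} z^k Σ_{j=-k}^{k} y^j q^{k(k+1)-j²}` satisfies the
functional equation
`H(z) = 1/(1−yqz) + 1/(1−y⁻¹qz) − 1 + z q² H(zq²)`. -/
theorem stmt6 {K : Type*} [Field K] (y q : K) (hy : y ≠ 0) (hq : q ≠ 0) :
    letI H : PowerSeries K :=
      PowerSeries.mk fun k => ∑ j ∈ Finset.Icc (-(k : ℤ)) (k : ℤ),
        y ^ j * q ^ ((k : ℤ) * ((k : ℤ) + 1) - j ^ 2)
    H = (1 - PowerSeries.C (R := K) (y * q) * PowerSeries.X)⁻¹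
        + (1 - PowerSeries.C (R := K) (y⁻¹ * q) * PowerSeries.X)⁻¹
        - 1
        + PowerSeries.C (R := K) (q ^ 2) * PowerSeries.X * PowerSeries.rescale (q ^ 2) H := by
  rw [geom_inv, geom_inv, mul_assoc]
  ext n
  simp only [map_add, map_sub, PowerSeries.coeff_mk, PowerSeries.coeff_C_mul]
  cases n with
  | zero =>
    simp
  | succ m =>
    rw [PowerSeries.coeff_one, if_neg (Nat.succ_ne_zero m),
      PowerSeries.coeff_succ_X_mul, PowerSeries.coeff_rescale, PowerSeries.coeff_mk]
    have hset : Finset.Icc (-((m:ℤ)+1)) ((m:ℤ)+1)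
        = insert (-((m:ℤ)+1)) (insert ((m:ℤ)+1) (Finset.Icc (-(m:ℤ)) (m:ℤ))) := by
      ext a
      simp only [Finset.mem_Icc, Finset.mem_insert]
      omega
    push_cast
    rw [hset, Finset.sum_insert (by simp; omega), Finset.sum_insert (by simp)]
    have h1 : y ^ (-((m:ℤ)+1)) * q ^ (((m:ℤ)+1) * (((m:ℤ)+1) + 1) - (-((m:ℤ)+1)) ^ 2)
        = (y⁻¹ * q) ^ (m+1) := by
      rw [show (((m:ℤ)+1) * (((m:ℤ)+1) + 1) - (-((m:ℤ)+1)) ^ 2) = ((m+1 : ℕ) : ℤ) by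
        push_cast; ring]
      rw [show (-((m:ℤ)+1)) = -((m+1 : ℕ) : ℤ) by push_cast; ring]
      rw [zpow_neg, zpow_natCast, zpow_natCast, mul_pow, inv_pow]
    have h2 : y ^ (((m:ℤ)+1)) * q ^ (((m:ℤ)+1) * (((m:ℤ)+1) + 1) - (((m:ℤ)+1)) ^ 2)
        = (y * q) ^ (m+1) := by
      rw [show (((m:ℤ)+1) * (((m:ℤ)+1) + 1) - (((m:ℤ)+1)) ^ 2) = ((m+1 : ℕ) : ℤ) by
        push_cast; ring]
      rw [show (((m:ℤ)+1)) = ((m+1 : ℕ) : ℤ) by push_cast; ring]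
      rw [zpow_natCast, zpow_natCast, mul_pow]
    rw [h1, h2]
    have h3 : ∀ j ∈ Finset.Icc (-(m:ℤ)) (m:ℤ),
        y ^ j * q ^ (((m:ℤ)+1) * (((m:ℤ)+1) + 1) - j ^ 2)
        = q ^ 2 * ((q ^ 2) ^ m * (y ^ j * q ^ ((m:ℤ) * ((m:ℤ)+1) - j ^ 2))) := by
      intro j hj
      have e1 : (q:K)^2 * ((q^2)^m * (y ^ j * q ^ ((m:ℤ)*((m:ℤ)+1) - j^2)))
          = y ^ j * (q ^ (((2*m+2:ℕ)):ℤ) * q ^ ((m:ℤ)*((m:ℤ)+1) - j^2)) := by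
        rw [zpow_natCast]; push_cast; ring
      rw [e1, ← zpow_add₀ hq]
      congr 2
      push_cast; ring
    rw [Finset.sum_congr rfl h3, ← Finset.mul_sum, ← Finset.mul_sum]
    ring
end

section
/- Jacobi's triple product specialization: as formal power series in q, Π_{i≥1} (1−q^i)/(1+q^i) = Σ_{i=-∞}^{∞} (−q)^{i^2} = 1 + 2 Σ_{i≥1} (−1)^{i^2} q^{i^2} = 1 + 2 Σ_{i≥1} (−1)^i q^{i^2}. -/
open PowerSeries

/-- Coefficients of `Σ_{i∈ℤ} (−q)^{i²} = 1 + 2 Σ_{i≥1} (−1)^i q^{i²}` in `ℤ⟦q⟧`. -/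
noncomputable def jacobiRHS : PowerSeries ℤ :=
  PowerSeries.mk fun n =>
    if n = 0 then 1 else if (Nat.sqrt n) ^ 2 = n then 2 * (-1 : ℤ) ^ (Nat.sqrt n) else 0

/-- One factor `(1−q^i)/(1+q^i)` of the infinite product (here `i = j+1 ≥ 1`),
the denominator being inverted via its inverse as a unit of `ℤ⟦q⟧`. -/
noncomputable def jacobiFactor (j : ℕ) : PowerSeries ℤ :=
  (1 - PowerSeries.X ^ (j + 1)) *
    PowerSeries.invOfUnit (1 + PowerSeries.X ^ (j + 1)) 1

noncomputable section JTP
namespace JTPaux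
open Finset

/-- `Ev j = ∏_{i=1}^{j} (1 - X^{2i})`. -/
def Ev (j : ℕ) : PowerSeries ℤ := ∏ i ∈ range j, (1 - X ^ (2*(i+1)))

/-- `Mid a b = ∏_{i=1}^{b} (1 - X^{2(a+i)})`. -/
def Mid (a b : ℕ) : PowerSeries ℤ := ∏ i ∈ range b, (1 - X ^ (2*(a+1+i)))

lemma cc_one_sub (k : ℕ) : constantCoeff (R := ℤ) (1 - X ^ (k+1)) = 1 := by
  simp [map_sub, map_pow]

lemma cc_Ev (j : ℕ) : constantCoeff (R := ℤ) (Ev j) = 1 := by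
  rw [Ev, map_prod]
  refine Finset.prod_eq_one fun i _ => ?_
  have : 2*(i+1) = (2*i+1)+1 := by omega
  rw [this, cc_one_sub]

lemma cc_Mid (a b : ℕ) : constantCoeff (R := ℤ) (Mid a b) = 1 := by
  rw [Mid, map_prod]
  refine Finset.prod_eq_one fun i _ => ?_
  have : 2*(a+1+i) = (2*(a+i)+1)+1 := by omega
  rw [this, cc_one_sub]

lemma mul_inv_of_cc (f : PowerSeries ℤ) (h : constantCoeff (R := ℤ) f = 1) :
    f * invOfUnit f 1 = 1 :=
  PowerSeries.mul_invOfUnit f 1 (by simpa using h)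

lemma isUnit_of_cc (f : PowerSeries ℤ) (h : constantCoeff (R := ℤ) f = 1) : IsUnit f :=
  IsUnit.of_mul_eq_one (a := f) _ (mul_inv_of_cc f h)

lemma ne_zero_of_cc (f : PowerSeries ℤ) (h : constantCoeff (R := ℤ) f = 1) : f ≠ 0 := by
  intro hf; rw [hf] at h; simp at h

lemma dvd_of_dvd_mul_unit {d f u : PowerSeries ℤ} (hu : IsUnit u) (h : d ∣ f * u) :
    d ∣ f := by
  obtain ⟨v, hv⟩ := hu.exists_right_inv
  have : f = f * u * v := by rw [mul_assoc, hv, mul_one]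
  rw [this]; exact h.mul_right v

lemma Ev_succ (j : ℕ) : Ev (j+1) = Ev j * (1 - X ^ (2*(j+1))) := by
  rw [Ev, Finset.prod_range_succ, Ev]

lemma Mid_succ (a b : ℕ) : Mid a (b+1) = Mid a b * (1 - X ^ (2*(a+1+b))) := by
  rw [Mid, Finset.prod_range_succ, Mid]

lemma Mid_succ' (a b : ℕ) : Mid a (b+1) = (1 - X ^ (2*(a+1))) * Mid (a+1) b := by
  rw [Mid, Finset.prod_range_succ', Mid, mul_comm]
  rw [show 2*(a+1+0) = 2*(a+1) by omega]
  congr 1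
  exact Finset.prod_congr rfl fun i _ => by rw [show 2*(a+1+(i+1)) = 2*(a+1+1+i) by omega]

lemma Ev_add (a b : ℕ) : Ev (a+b) = Ev a * Mid a b := by
  induction b with
  | zero => simp [Mid]
  | succ b ih =>
      rw [show a+(b+1) = (a+b)+1 from rfl, Ev_succ, ih, Mid_succ, mul_assoc,
        show 2*(a+b+1) = 2*(a+1+b) by omega]

lemma Mid_zero_eq_Ev (b : ℕ) : Mid 0 b = Ev b := by
  rw [Mid, Ev]
  exact Finset.prod_congr rfl fun i _ => by rw [show 2*(0+1+i) = 2*(i+1) by omega]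

lemma X_pow_dvd_Mid_sub_one (a b : ℕ) : (X : PowerSeries ℤ)^(2*a+2) ∣ Mid a b - 1 := by
  induction b with
  | zero => simp [Mid]
  | succ b ih =>
      rw [Mid_succ]
      have h2 : (X : PowerSeries ℤ)^(2*a+2) ∣ X ^ (2*(a+1+b)) :=
        pow_dvd_pow X (by omega)
      have : Mid a b * (1 - X ^ (2*(a+1+b))) - 1
          = (Mid a b - 1) - Mid a b * X ^ (2*(a+1+b)) := by ring
      rw [this]
      exact dvd_sub ih (Dvd.dvd.mul_left h2 _)


/-- Gaussian binomial `[N, m]_{X²}` as a power series (0 outside `0 ≤ m ≤ N`). -/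
def g (N : ℕ) (m : ℤ) : PowerSeries ℤ :=
  if 0 ≤ m ∧ m ≤ N then Mid m.toNat (N - m.toNat) * invOfUnit (Ev (N - m.toNat)) 1 else 0

lemma g_eq_zero_of_neg {N : ℕ} {m : ℤ} (h : m < 0) : g N m = 0 := by
  rw [g, if_neg]; omega

lemma g_eq_zero_of_gt {N : ℕ} {m : ℤ} (h : (N:ℤ) < m) : g N m = 0 := by
  rw [g, if_neg]; omega

lemma g_mul_Ev {N : ℕ} {m : ℤ} (h0 : 0 ≤ m) (h1 : m ≤ N) :
    g N m * Ev (N - m.toNat) = Mid m.toNat (N - m.toNat) := by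
  rw [g, if_pos ⟨h0, h1⟩, mul_assoc, mul_comm (invOfUnit _ _), mul_inv_of_cc _ (cc_Ev _),
    mul_one]

lemma g_zero (N : ℕ) : g N 0 = 1 := by
  rw [g, if_pos (by omega)]
  simp only [Int.toNat_zero, Nat.sub_zero, Mid_zero_eq_Ev]
  exact mul_inv_of_cc _ (cc_Ev _)

lemma g_self (N : ℕ) : g N N = 1 := by
  rw [g, if_pos (by omega)]
  simp only [Int.toNat_natCast, Nat.sub_self]
  have h1 : Mid N 0 = 1 := by simp [Mid]
  have h2 : Ev 0 = 1 := by simp [Ev]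
  rw [h1, h2, one_mul]
  have := mul_inv_of_cc (1 : PowerSeries ℤ) (by simp)
  simpa using this

lemma Ev_ne_zero (j : ℕ) : Ev j ≠ 0 := ne_zero_of_cc _ (cc_Ev j)

/-- First Pascal recurrence. -/
lemma pascal1 (N : ℕ) (m : ℤ) :
    g (N+1) m = g N (m-1) + X ^ (2*m.toNat) * g N m := by
  rcases lt_or_ge m 0 with hm | hm
  · rw [g_eq_zero_of_neg hm, g_eq_zero_of_neg (by omega), g_eq_zero_of_neg hm]; ring
  rcases eq_or_lt_of_le hm with hm0 | hmpos
  · rw [← hm0, g_zero, g_zero, g_eq_zero_of_neg (by omega)]; simp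
  rcases lt_or_ge (N:ℤ) m with hgt | hle
  · rcases eq_or_lt_of_le (by omega : (N:ℤ)+1 ≤ m) with he | hlt
    · have hGm : g N m = 0 := g_eq_zero_of_gt hgt
      have hGm1 : g N (m-1) = 1 := by
        rw [show m-1 = ((N:ℕ):ℤ) by omega]; exact g_self N
      have hG : g (N+1) m = 1 := by
        rw [show m = ((N+1:ℕ):ℤ) by push_cast; omega]; exact g_self (N+1)
      rw [hG, hGm, hGm1]; ring
    · rw [g_eq_zero_of_gt (show ((N+1:ℕ):ℤ) < m by push_cast; omega),
        g_eq_zero_of_gt (show (N:ℤ) < m-1 by omega), g_eq_zero_of_gt (by omega)]; ring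
  -- main case: 1 ≤ m ≤ N
  have hmN : m.toNat ≤ N := by omega
  have hm1 : 1 ≤ m.toNat := by omega
  set mm := m.toNat with hmm
  have hmval : m = (mm:ℤ) := by omega
  apply mul_right_cancel₀ (Ev_ne_zero (N+1-mm))
  rw [add_mul]
  have e1 : g (N+1) m * Ev (N+1-mm) = Mid mm (N+1-mm) := by
    have := g_mul_Ev (N := N+1) (m := m) hm (by push_cast; omega)
    rwa [← hmm] at this
  have e2 : g N (m-1) * Ev (N+1-mm) = Mid (mm-1) (N+1-mm) := by
    have h := g_mul_Ev (N := N) (m := m-1) (by omega) (by omega)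
    rw [show (m-1).toNat = mm - 1 by omega, show N - (mm-1) = N+1-mm by omega] at h
    exact h
  have e3 : X ^ (2*mm) * g N m * Ev (N+1-mm)
      = X ^ (2*mm) * (Mid mm (N-mm) * (1 - X ^ (2*(N+1-mm)))) := by
    rw [show N+1-mm = (N-mm)+1 by omega, Ev_succ, show 2*(N-mm+1) = 2*(N+1-mm) by omega]
    rw [mul_assoc, ← mul_assoc (g N m), g_mul_Ev hm hle, ← hmm]
  rw [e1, e2, e3]
  -- polynomial identity
  have key : Mid mm (N+1-mm) = Mid mm (N-mm) * (1 - X ^ (2*(N+1))) := by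
    rw [show N+1-mm = (N-mm)+1 by omega, Mid_succ, show 2*(mm+1+(N-mm)) = 2*(N+1) by omega]
  have key2 : Mid (mm-1) (N+1-mm) = (1 - X ^ (2*mm)) * Mid mm (N-mm) := by
    have h := Mid_succ' (mm-1) (N-mm)
    rw [show mm-1+1 = mm by omega] at h
    rw [show N+1-mm = (N-mm)+1 by omega]
    exact h
  rw [key, key2]
  have hx : (X:PowerSeries ℤ) ^ (2*mm) * X ^ (2*(N+1-mm)) = X ^ (2*(N+1)) := by
    rw [← pow_add]; congr 1; omega
  calc Mid mm (N-mm) * (1 - X ^ (2*(N+1)))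
      = (1 - X ^ (2*mm)) * Mid mm (N-mm)
        + X ^ (2*mm) * (Mid mm (N-mm) * (1 - X ^ (2*(N+1-mm)))) := by
        have : (1 - (X:PowerSeries ℤ) ^ (2*(N+1)))
            = (1 - X ^ (2*mm)) + X ^ (2*mm) * (1 - X ^ (2*(N+1-mm))) := by
          rw [mul_sub, mul_one, hx]; ring
        rw [mul_comm (Mid mm (N-mm)), this]; ring
    _ = _ := rfl

/-- Second Pascal recurrence. -/
lemma pascal2 (N : ℕ) (m : ℤ) :
    g (N+1) m = X ^ (2*(N+1-m.toNat)) * g N (m-1) + g N m := by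
  rcases lt_or_ge m 0 with hm | hm
  · rw [g_eq_zero_of_neg hm, g_eq_zero_of_neg (by omega), g_eq_zero_of_neg hm]; ring
  rcases eq_or_lt_of_le hm with hm0 | hmpos
  · rw [← hm0, g_zero, g_zero, g_eq_zero_of_neg (by omega)]; simp
  rcases lt_or_ge (N:ℤ) m with hgt | hle
  · rcases eq_or_lt_of_le (by omega : (N:ℤ)+1 ≤ m) with he | hlt
    · have hGm : g N m = 0 := g_eq_zero_of_gt hgt
      have hGm1 : g N (m-1) = 1 := by
        rw [show m-1 = ((N:ℕ):ℤ) by omega]; exact g_self N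
      have hG : g (N+1) m = 1 := by
        rw [show m = ((N+1:ℕ):ℤ) by push_cast; omega]; exact g_self (N+1)
      rw [hG, hGm, hGm1, show N+1-m.toNat = 0 by omega, pow_zero]; ring
    · rw [g_eq_zero_of_gt (show ((N+1:ℕ):ℤ) < m by push_cast; omega),
        g_eq_zero_of_gt (show (N:ℤ) < m-1 by omega), g_eq_zero_of_gt (by omega)]; ring
  -- main case: 1 ≤ m ≤ N
  have hmN : m.toNat ≤ N := by omega
  have hm1 : 1 ≤ m.toNat := by omega
  set mm := m.toNat with hmm
  apply mul_right_cancel₀ (Ev_ne_zero (N+1-mm))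
  rw [add_mul]
  have e1 : g (N+1) m * Ev (N+1-mm) = Mid mm (N+1-mm) := by
    have := g_mul_Ev (N := N+1) (m := m) hm (by push_cast; omega)
    rwa [← hmm] at this
  have e2 : X ^ (2*(N+1-mm)) * g N (m-1) * Ev (N+1-mm)
      = X ^ (2*(N+1-mm)) * Mid (mm-1) (N+1-mm) := by
    have h := g_mul_Ev (N := N) (m := m-1) (by omega) (by omega)
    rw [show (m-1).toNat = mm - 1 by omega, show N - (mm-1) = N+1-mm by omega] at h
    rw [mul_assoc, h]
  have e3 : g N m * Ev (N+1-mm) = Mid mm (N-mm) * (1 - X ^ (2*(N+1-mm))) := by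
    rw [show N+1-mm = (N-mm)+1 by omega, Ev_succ, show 2*(N-mm+1) = 2*(N+1-mm) by omega]
    rw [← mul_assoc, g_mul_Ev hm hle, ← hmm]
  rw [e1, e2, e3]
  have key : Mid mm (N+1-mm) = Mid mm (N-mm) * (1 - X ^ (2*(N+1))) := by
    rw [show N+1-mm = (N-mm)+1 by omega, Mid_succ, show 2*(mm+1+(N-mm)) = 2*(N+1) by omega]
  have key2 : Mid (mm-1) (N+1-mm) = (1 - X ^ (2*mm)) * Mid mm (N-mm) := by
    have h := Mid_succ' (mm-1) (N-mm)
    rw [show mm-1+1 = mm by omega] at h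
    rw [show N+1-mm = (N-mm)+1 by omega]
    exact h
  rw [key, key2]
  have hx : (X:PowerSeries ℤ) ^ (2*(N+1-mm)) * X ^ (2*mm) = X ^ (2*(N+1)) := by
    rw [← pow_add]; congr 1; omega
  have : (1 - (X:PowerSeries ℤ) ^ (2*(N+1)))
      = X ^ (2*(N+1-mm)) * (1 - X ^ (2*mm)) + (1 - X ^ (2*(N+1-mm))) := by
    rw [mul_sub, mul_one, hx]; ring
  rw [mul_comm (Mid mm (N-mm)) (1 - X ^ (2*(N+1))), this]
  ring


/-- Double Pascal step from level `2n+2` down to `2n`. -/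
lemma gstep (n : ℕ) (m : ℤ) :
    g (2*n+2) m = X ^ (2*(2*n+2) - 2*m.toNat) * g (2*n) (m-2)
      + (1 + X ^ (4*n+2)) * g (2*n) (m-1) + X ^ (2*m.toNat) * g (2*n) m := by
  rw [show 2*n+2 = (2*n+1)+1 from rfl, pascal1, pascal2, pascal2]
  have h1 : X ^ (2*(2*n+1-(m-1).toNat)) * g (2*n) (m-1-1)
      = X ^ (2*(2*n+2) - 2*m.toNat) * g (2*n) (m-2) := by
    rcases le_or_gt m 1 with hm | hm
    · rw [g_eq_zero_of_neg (show m-1-1 < 0 by omega),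
        g_eq_zero_of_neg (show m-2 < 0 by omega), mul_zero, mul_zero]
    rcases le_or_gt m (2*n+2 : ℤ) with hm2 | hm2
    · rw [show m-1-1 = m-2 by ring]
      congr 2
      omega
    · rw [g_eq_zero_of_gt (show ((2*n:ℕ):ℤ) < m-1-1 by push_cast; omega),
        g_eq_zero_of_gt (show ((2*n:ℕ):ℤ) < m-2 by push_cast; omega), mul_zero, mul_zero]
  have h2 : (X:PowerSeries ℤ) ^ (2*m.toNat) * (X ^ (2*(2*n+1-m.toNat)) * g (2*n) (m-1))
      = X ^ (4*n+2) * g (2*n) (m-1) := by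
    rcases le_or_gt m.toNat (2*n+1 : ℕ) with hm | hm
    · rw [← mul_assoc, ← pow_add]
      congr 2
      omega
    · rw [g_eq_zero_of_gt (show ((2*n:ℕ):ℤ) < m-1 by push_cast; omega),
        mul_zero, mul_zero, mul_zero]
  rw [h1, mul_add (X ^ (2*m.toNat)) _ (g (2*n) m), h2]
  ring

/-- The signed weight `(−1)^{|j|} X^{j²}`. -/
def wt (j : ℤ) : PowerSeries ℤ := (-1 : PowerSeries ℤ)^(j.natAbs) * X^(j.natAbs^2)

/-- The central sum `Σ_{k=-n}^{n} (−1)^k X^{k²} [2n, n+k]_{X²}`. -/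
def Rsum (n : ℕ) : PowerSeries ℤ :=
  ∑ m ∈ Icc (0:ℤ) (2*(n:ℤ)), wt (m - n) * g (2*n) m

lemma wt_aux (a b e f : ℕ) (hs : a + 1 = b ∨ b + 1 = a) (he : a^2 + e = b^2 + f) :
    (-1:PowerSeries ℤ)^a * X^(a^2) * X^e = -((-1:PowerSeries ℤ)^b * X^(b^2) * X^f) := by
  have hsign : (-1:PowerSeries ℤ)^a = -(-1:PowerSeries ℤ)^b := by
    rcases hs with h | h
    · rw [← h, pow_succ]; ring
    · rw [← h, pow_succ]; ring
  rw [mul_assoc, mul_assoc, ← pow_add, ← pow_add, he, hsign]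
  ring

lemma Rsum_succ (n : ℕ) : Rsum (n+1) = (1 - X^(2*n+1))^2 * Rsum n := by
  have hIcc : Icc (0:ℤ) (2*((n+1:ℕ):ℤ)) = Icc (0:ℤ) (2*(n:ℤ)+2) := by
    rw [show 2*((n+1:ℕ):ℤ) = 2*(n:ℤ)+2 by push_cast; ring]
  have hcast : ∀ m : ℤ, m - ((n+1:ℕ):ℤ) = m - n - 1 := by intro m; push_cast; ring
  rw [Rsum, hIcc, show 2*(n+1) = 2*n+2 from rfl]
  have hterm : ∀ m ∈ Icc (0:ℤ) (2*(n:ℤ)+2),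
      wt (m - ((n+1:ℕ):ℤ)) * g (2*n+2) m
        = wt (m-(n:ℤ)-1) * (X ^ (2*(2*n+2) - 2*m.toNat) * g (2*n) (m-2))
          + wt (m-(n:ℤ)-1) * ((1 + X ^ (4*n+2)) * g (2*n) (m-1))
          + wt (m-(n:ℤ)-1) * (X ^ (2*m.toNat) * g (2*n) m) := by
    intro m _
    rw [hcast, gstep]; ring
  rw [Finset.sum_congr rfl hterm, Finset.sum_add_distrib, Finset.sum_add_distrib]
  -- Sum 1
  have hS1 : ∑ m ∈ Icc (0:ℤ) (2*(n:ℤ)+2),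
      wt (m-(n:ℤ)-1) * (X ^ (2*(2*n+2) - 2*m.toNat) * g (2*n) (m-2))
      = -(X^(2*n+1) * Rsum n) := by
    rw [← Finset.sum_subset (Finset.Icc_subset_Icc (by omega) (le_refl (2*(n:ℤ)+2))
        : Icc (2:ℤ) (2*(n:ℤ)+2) ⊆ Icc (0:ℤ) (2*(n:ℤ)+2))
        (by intro m hm hnm
            rw [g_eq_zero_of_neg (by simp [Finset.mem_Icc] at hm hnm; omega), mul_zero, mul_zero])]
    rw [show Icc (2:ℤ) (2*(n:ℤ)+2) = Finset.map (addRightEmbedding 2) (Icc (0:ℤ) (2*(n:ℤ)))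
        from by rw [map_add_right_Icc, zero_add]]
    rw [Finset.sum_map, Rsum, Finset.mul_sum, ← Finset.sum_neg_distrib]
    refine Finset.sum_congr rfl fun k hk => ?_
    rw [Finset.mem_Icc] at hk
    rw [addRightEmbedding_apply]
    have hexp : 2*(2*n+2) - 2*(k+2).toNat = 2*(2*n) - 2*k.toNat := by omega
    have haux := wt_aux ((k+1-(n:ℤ)).natAbs) ((k-(n:ℤ)).natAbs)
        (2*(2*n) - 2*k.toNat) (2*n+1)
        (by omega)
        (by zify [show 2*k.toNat ≤ 2*(2*n) from by omega]
            rw [sq_abs, sq_abs, Int.toNat_of_nonneg hk.1]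
            push_cast
            ring)
    calc wt (k+2-(n:ℤ)-1) * (X ^ (2*(2*n+2) - 2*(k+2).toNat) * g (2*n) (k+2-2))
        = ((-1:PowerSeries ℤ)^((k+1-(n:ℤ)).natAbs) * X^((k+1-(n:ℤ)).natAbs^2)
            * X^(2*(2*n) - 2*k.toNat)) * g (2*n) k := by
          rw [hexp, show k+2-(n:ℤ)-1 = k+1-n by ring, show k+2-2 = k by ring, wt]; ring
      _ = (-((-1:PowerSeries ℤ)^((k-(n:ℤ)).natAbs) * X^((k-(n:ℤ)).natAbs^2)
            * X^(2*n+1))) * g (2*n) k := by rw [haux]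
      _ = -(X ^ (2*n+1) * (wt (k-(n:ℤ)) * g (2*n) k)) := by rw [wt]; ring
  -- Sum 2
  have hS2 : ∑ m ∈ Icc (0:ℤ) (2*(n:ℤ)+2),
      wt (m-(n:ℤ)-1) * ((1 + X ^ (4*n+2)) * g (2*n) (m-1))
      = (1 + X ^ (4*n+2)) * Rsum n := by
    rw [← Finset.sum_subset (Finset.Icc_subset_Icc (by omega) (by omega)
        : Icc (1:ℤ) (2*(n:ℤ)+1) ⊆ Icc (0:ℤ) (2*(n:ℤ)+2))
        (by intro m hm hnm
            simp only [Finset.mem_Icc] at hm hnm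
            rcases lt_or_ge (m-1) 0 with h | h
            · rw [g_eq_zero_of_neg h, mul_zero, mul_zero]
            · rw [g_eq_zero_of_gt (show ((2*n:ℕ):ℤ) < m-1 by push_cast; omega),
                mul_zero, mul_zero])]
    rw [show Icc (1:ℤ) (2*(n:ℤ)+1) = Finset.map (addRightEmbedding 1) (Icc (0:ℤ) (2*(n:ℤ)))
        from by rw [map_add_right_Icc, zero_add]]
    rw [Finset.sum_map, Rsum, Finset.mul_sum]
    refine Finset.sum_congr rfl fun k hk => ?_
    rw [addRightEmbedding_apply, show k+1-(n:ℤ)-1 = k-n by ring, show k+1-1 = k by ring]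
    ring
  -- Sum 3
  have hS3 : ∑ m ∈ Icc (0:ℤ) (2*(n:ℤ)+2),
      wt (m-(n:ℤ)-1) * (X ^ (2*m.toNat) * g (2*n) m)
      = -(X^(2*n+1) * Rsum n) := by
    rw [← Finset.sum_subset (Finset.Icc_subset_Icc (le_refl (0:ℤ)) (by omega)
        : Icc (0:ℤ) (2*(n:ℤ)) ⊆ Icc (0:ℤ) (2*(n:ℤ)+2))
        (by intro m hm hnm
            simp only [Finset.mem_Icc] at hm hnm
            rw [g_eq_zero_of_gt (show ((2*n:ℕ):ℤ) < m by push_cast; omega),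
              mul_zero, mul_zero])]
    rw [Rsum, Finset.mul_sum, ← Finset.sum_neg_distrib]
    refine Finset.sum_congr rfl fun k hk => ?_
    rw [Finset.mem_Icc] at hk
    have haux := wt_aux ((k-(n:ℤ)-1).natAbs) ((k-(n:ℤ)).natAbs)
        (2*k.toNat) (2*n+1)
        (by omega)
        (by zify
            rw [sq_abs, sq_abs, Int.toNat_of_nonneg hk.1]
            push_cast
            ring)
    calc wt (k-(n:ℤ)-1) * (X ^ (2*k.toNat) * g (2*n) k)
        = ((-1:PowerSeries ℤ)^((k-(n:ℤ)-1).natAbs) * X^((k-(n:ℤ)-1).natAbs^2)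
            * X^(2*k.toNat)) * g (2*n) k := by rw [wt]; ring
      _ = (-((-1:PowerSeries ℤ)^((k-(n:ℤ)).natAbs) * X^((k-(n:ℤ)).natAbs^2)
            * X^(2*n+1))) * g (2*n) k := by rw [haux]
      _ = -(X ^ (2*n+1) * (wt (k-(n:ℤ)) * g (2*n) k)) := by rw [wt]; ring
  rw [hS1, hS2, hS3]
  have hxx : (X:PowerSeries ℤ)^(4*n+2) = X^(2*n+1) * X^(2*n+1) := by
    rw [← pow_add]; congr 1; omega
  rw [hxx]; ring

lemma Rsum_zero : Rsum 0 = 1 := by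
  rw [Rsum]
  norm_num
  rw [g_zero, wt]
  norm_num

/-- The odd product `∏_{a<M} (1 - X^{2a+1})`. -/
def Od (M : ℕ) : PowerSeries ℤ := ∏ a ∈ range M, (1 - X^(2*a+1))

/-- Terminating Jacobi triple product specialization. -/
lemma jtp (M : ℕ) : Od M ^ 2 = Rsum M := by
  induction M with
  | zero => simp [Od, Rsum_zero]
  | succ M ih =>
      rw [Od, Finset.prod_range_succ, ← Od, mul_pow, ih, Rsum_succ, mul_comm]


/-! ### Closeness of `g · Ev M` to 1 -/

lemma gEv_close (M : ℕ) (m : ℤ) (h0 : 0 ≤ m) (h2 : m ≤ 2*(M:ℤ)) (K : ℕ)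
    (hK1 : K ≤ 2*m.toNat + 2) (hK2 : K ≤ 2*(2*M - m.toNat) + 2) :
    (X:PowerSeries ℤ)^K ∣ g (2*M) m * Ev M - 1 := by
  set mm := m.toNat with hmm
  have hm2M : mm ≤ 2*M := by omega
  have hg : g (2*M) m * Ev (2*M - mm) = Mid mm (2*M - mm) :=
    g_mul_Ev h0 (by push_cast; omega)
  have hdvd1 : (X:PowerSeries ℤ)^K ∣ Mid mm (2*M - mm) - 1 :=
    dvd_trans (pow_dvd_pow X (by omega : K ≤ 2*mm+2)) (X_pow_dvd_Mid_sub_one _ _)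
  rcases le_or_gt M mm with hc | hc
  · -- j := 2M - mm ≤ M
    have hEvM : Ev M = Ev (2*M - mm) * Mid (2*M - mm) (M - (2*M - mm)) := by
      rw [← Ev_add, show (2*M - mm) + (M - (2*M - mm)) = M by omega]
    have hdvd2 : (X:PowerSeries ℤ)^K ∣ Mid (2*M - mm) (M - (2*M - mm)) - 1 :=
      dvd_trans (pow_dvd_pow X (show K ≤ 2*(2*M - mm)+2 by omega)) (X_pow_dvd_Mid_sub_one _ _)
    have : g (2*M) m * Ev M - 1
        = Mid mm (2*M - mm) * (Mid (2*M - mm) (M - (2*M - mm)) - 1)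
          + (Mid mm (2*M - mm) - 1) := by
      rw [hEvM, ← mul_assoc, hg]; ring
    rw [this]
    exact dvd_add (Dvd.dvd.mul_left hdvd2 _) hdvd1
  · -- j := 2M - mm > M
    have hEvj : Ev (2*M - mm) = Ev M * Mid M (2*M - mm - M) := by
      rw [← Ev_add, show M + (2*M - mm - M) = 2*M - mm by omega]
    have hdvd2 : (X:PowerSeries ℤ)^K ∣ Mid M (2*M - mm - M) - 1 :=
      dvd_trans (pow_dvd_pow X (show K ≤ 2*M+2 by omega)) (X_pow_dvd_Mid_sub_one _ _)
    have hmul : (g (2*M) m * Ev M - 1) * Mid M (2*M - mm - M)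
        = (Mid mm (2*M - mm) - 1) - (Mid M (2*M - mm - M) - 1) := by
      have : g (2*M) m * Ev M * Mid M (2*M - mm - M) = Mid mm (2*M - mm) := by
        rw [mul_assoc, ← hEvj, hg]
      rw [sub_mul, this]; ring
    refine dvd_of_dvd_mul_unit (u := Mid M (2*M - mm - M))
      (isUnit_of_cc _ (cc_Mid M (2*M - mm - M))) ?_
    rw [hmul]
    exact dvd_sub hdvd1 hdvd2

/-! ### Coefficients of the central sum -/

lemma coeff_wt (t : ℕ) (j : ℤ) :
    (coeff (R := ℤ) t) (wt j) = if j.natAbs^2 = t then (-1:ℤ)^(j.natAbs) else 0 := by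
  rw [wt, show ((-1:PowerSeries ℤ))^(j.natAbs) = C (R := ℤ) ((-1)^(j.natAbs)) by
      rw [map_pow, map_neg, map_one]]
  rw [coeff_C_mul, coeff_X_pow]
  split_ifs with h1 h2 h2
  · ring
  · exact absurd h1.symm h2
  · exact absurd h2.symm h1
  · ring

lemma theta_close (n M : ℕ) (h : n < M) :
    (X:PowerSeries ℤ)^(n+1) ∣ jacobiRHS - ∑ m ∈ Icc (0:ℤ) (2*(M:ℤ)), wt (m - M) := by
  rw [X_pow_dvd_iff]
  intro t ht
  rw [map_sub, map_sum, sub_eq_zero, jacobiRHS, coeff_mk]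
  have hconv : ∀ m : ℤ, (coeff (R := ℤ) t) (wt (m - M))
      = if (m-(M:ℤ)).natAbs^2 = t then (-1:ℤ)^((m-(M:ℤ)).natAbs) else 0 :=
    fun m => coeff_wt t _
  rcases eq_or_ne t 0 with rfl | ht0
  · have hpt : ∀ m ∈ Icc (0:ℤ) (2*(M:ℤ)), (coeff (R := ℤ) 0) (wt (m - M))
        = if m = (M:ℤ) then (1:ℤ) else 0 := by
      intro m _
      rw [hconv m]
      by_cases hme : m = (M:ℤ)
      · subst hme
        rw [if_pos rfl, if_pos (by simp), show ((M:ℤ) - M).natAbs = 0 by omega]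
        norm_num
      · rw [if_neg hme, if_neg (pow_ne_zero 2 (by omega : (m-(M:ℤ)).natAbs ≠ 0))]
    rw [if_pos (rfl : (0:ℕ) = 0), Finset.sum_congr rfl hpt,
      Finset.sum_ite_eq' (Icc (0:ℤ) (2*(M:ℤ))) ((M:ℤ)) (fun _ => (1:ℤ)),
      if_pos (show (M:ℤ) ∈ Icc (0:ℤ) (2*(M:ℤ)) from by rw [Finset.mem_Icc]; omega)]
  · rw [if_neg ht0]
    rcases eq_or_ne (Nat.sqrt t ^ 2) t with hsq | hsq
    · rw [if_pos hsq]
      set d := Nat.sqrt t with hd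
      have hd1 : 1 ≤ d := by
        rcases Nat.eq_zero_or_pos d with h0 | h0
        · exfalso; apply ht0; rw [← hsq, h0]; norm_num
        · exact h0
      have hdM : d ≤ M := by
        have h1 : d ≤ d^2 := Nat.le_self_pow (by norm_num) d
        omega
      have hpt : ∀ m ∈ Icc (0:ℤ) (2*(M:ℤ)), (coeff (R := ℤ) t) (wt (m - M))
          = (if m = (M:ℤ)+d then (-1:ℤ)^d else 0)
            + (if m = (M:ℤ)-d then (-1:ℤ)^d else 0) := by
        intro m _
        rw [hconv m]
        by_cases h1 : m = (M:ℤ)+d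
        · have hna : (m-(M:ℤ)).natAbs = d := by omega
          rw [if_pos (by rw [hna]; exact hsq), hna, if_pos h1, if_neg (by omega)]
          ring
        · by_cases h2 : m = (M:ℤ)-d
          · have hna : (m-(M:ℤ)).natAbs = d := by omega
            rw [if_pos (by rw [hna]; exact hsq), hna, if_neg h1, if_pos h2]
            ring
          · have hna : (m-(M:ℤ)).natAbs ≠ d := by omega
            rw [if_neg (fun hc => hna (by rw [hd, ← hc, Nat.sqrt_eq'])),
              if_neg h1, if_neg h2]
            ring
      rw [Finset.sum_congr rfl hpt, Finset.sum_add_distrib,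
        Finset.sum_ite_eq' (Icc (0:ℤ) (2*(M:ℤ))) ((M:ℤ)+d) (fun _ => ((-1:ℤ)^d)),
        Finset.sum_ite_eq' (Icc (0:ℤ) (2*(M:ℤ))) ((M:ℤ)-d) (fun _ => ((-1:ℤ)^d)),
        if_pos (by rw [Finset.mem_Icc]; omega), if_pos (by rw [Finset.mem_Icc]; omega)]
      ring
    · rw [if_neg hsq]
      have hpt : ∀ m ∈ Icc (0:ℤ) (2*(M:ℤ)), (coeff (R := ℤ) t) (wt (m - M)) = (0:ℤ) := by
        intro m _
        rw [hconv m, if_neg (fun hc => hsq (by rw [← hc, Nat.sqrt_eq']))]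
      rw [Finset.sum_congr rfl hpt, Finset.sum_const_zero]

/-! ### The main truncated identity -/

lemma sum_close (n : ℕ) :
    (X:PowerSeries ℤ)^(n+1) ∣
      Rsum (2*n+2) * Ev (2*n+2) - ∑ m ∈ Icc (0:ℤ) (2*((2*n+2:ℕ):ℤ)), wt (m - ((2*n+2:ℕ):ℤ)) := by
  set M : ℕ := 2*n+2 with hM
  rw [Rsum, Finset.sum_mul, ← Finset.sum_sub_distrib]
  refine Finset.dvd_sum fun m hm => ?_
  rw [Finset.mem_Icc] at hm
  have hterm : wt (m - (M:ℤ)) * g (2*M) m * Ev M - wt (m - (M:ℤ))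
      = wt (m - (M:ℤ)) * (g (2*M) m * Ev M - 1) := by ring
  rw [hterm]
  set a := (m - (M:ℤ)).natAbs with ha
  rcases le_or_gt (n+1) (a^2) with hbig | hsmall
  · refine dvd_trans (pow_dvd_pow X hbig) ?_
    have : (X:PowerSeries ℤ)^(a^2) ∣ wt (m - (M:ℤ)) := by
      rw [wt, ← ha]; exact dvd_mul_left _ _
    exact this.mul_right _
  · have haa : a ≤ a^2 ∨ a = 0 := by
      rcases Nat.eq_zero_or_pos a with h0 | h0
      · exact Or.inr h0
      · exact Or.inl (Nat.le_self_pow (by norm_num) a)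
    have han : a ≤ n := by omega
    have := gEv_close M m hm.1 hm.2 (n+1) (by omega) (by omega)
    exact this.mul_left _

/-! ### The partial products of the infinite product -/

def AA (N : ℕ) : PowerSeries ℤ := ∏ j ∈ range N, (1 - X^(j+1))
def BB (N : ℕ) : PowerSeries ℤ := ∏ j ∈ range N, (1 + X^(j+1))

lemma cc_AA (N : ℕ) : constantCoeff (R := ℤ) (AA N) = 1 := by
  rw [AA, map_prod]
  exact Finset.prod_eq_one fun j _ => by simp [map_sub, map_pow]

lemma cc_BB (N : ℕ) : constantCoeff (R := ℤ) (BB N) = 1 := by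
  rw [BB, map_prod]
  exact Finset.prod_eq_one fun j _ => by simp [map_add, map_pow]

lemma AA_mul_BB (N : ℕ) : AA N * BB N = Ev N := by
  rw [AA, BB, ← Finset.prod_mul_distrib, Ev]
  refine Finset.prod_congr rfl fun j _ => ?_
  have h : (1 - (X:PowerSeries ℤ)^(j+1)) * (1 + X^(j+1)) = 1 - (X^(j+1))^2 := by ring
  rw [h, ← pow_mul, show (j+1)*2 = 2*(j+1) by ring]

lemma AA_split (M : ℕ) : AA (2*M) = Od M * Ev M := by
  induction M with
  | zero => simp [AA, Od, Ev]
  | succ M ih =>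
      rw [show 2*(M+1) = (2*M+1)+1 by ring, AA, Finset.prod_range_succ,
        Finset.prod_range_succ, ← AA, ih]
      have hOd : Od (M+1) = Od M * (1 - X^(2*M+1)) := by
        rw [Od, Finset.prod_range_succ, ← Od]
      rw [hOd, Ev_succ, show 2*M+1+1 = 2*(M+1) by ring]
      ring

lemma X_pow_dvd_prod_sub_one (K b : ℕ) (f : ℕ → PowerSeries ℤ)
    (hf : ∀ i, (X:PowerSeries ℤ)^K ∣ f i) :
    (X:PowerSeries ℤ)^K ∣ (∏ i ∈ range b, (1 + f i)) - 1 := by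
  induction b with
  | zero => simp
  | succ b ih =>
      rw [Finset.prod_range_succ]
      have h : (∏ i ∈ range b, (1 + f i)) * (1 + f b) - 1
          = ((∏ i ∈ range b, (1 + f i)) - 1) + (∏ i ∈ range b, (1 + f i)) * f b := by ring
      rw [h]
      exact dvd_add ih ((hf b).mul_left _)

lemma AA_diff (K N b : ℕ) (hK : K ≤ N+1) : (X:PowerSeries ℤ)^K ∣ AA (N+b) - AA N := by
  rw [AA, Finset.prod_range_add, ← AA]
  have h : ∏ i ∈ range b, (1 - (X:PowerSeries ℤ)^(N+i+1))
      = ∏ i ∈ range b, (1 + (-(X:PowerSeries ℤ)^(N+i+1))) :=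
    Finset.prod_congr rfl fun i _ => by ring
  have hdvd : (X:PowerSeries ℤ)^K ∣ (∏ i ∈ range b, (1 - (X:PowerSeries ℤ)^(N+i+1))) - 1 := by
    rw [h]
    exact X_pow_dvd_prod_sub_one K b _ fun i =>
      (dvd_neg.mpr (pow_dvd_pow X (by omega : K ≤ N+i+1)))
  have he : AA N * (∏ i ∈ range b, (1 - (X:PowerSeries ℤ)^(N+i+1))) - AA N
      = AA N * ((∏ i ∈ range b, (1 - (X:PowerSeries ℤ)^(N+i+1))) - 1) := by
    ring
  rw [he]
  exact hdvd.mul_left _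

lemma BB_diff (K N b : ℕ) (hK : K ≤ N+1) : (X:PowerSeries ℤ)^K ∣ BB (N+b) - BB N := by
  rw [BB, Finset.prod_range_add, ← BB]
  have hdvd : (X:PowerSeries ℤ)^K ∣ (∏ i ∈ range b, (1 + (X:PowerSeries ℤ)^(N+i+1))) - 1 :=
    X_pow_dvd_prod_sub_one K b _ fun i => pow_dvd_pow X (by omega : K ≤ N+i+1)
  have he : BB N * (∏ i ∈ range b, (1 + (X:PowerSeries ℤ)^(N+i+1))) - BB N
      = BB N * ((∏ i ∈ range b, (1 + (X:PowerSeries ℤ)^(N+i+1))) - 1) := by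
    ring
  rw [he]
  exact hdvd.mul_left _

/-! ### Assembly -/

lemma key1 (n : ℕ) :
    (X:PowerSeries ℤ)^(n+1) ∣ jacobiRHS - Od (2*n+2) ^ 2 * Ev (2*n+2) := by
  have h1 := theta_close n (2*n+2) (by omega)
  have h2 := sum_close n
  have he : jacobiRHS - Od (2*n+2) ^ 2 * Ev (2*n+2)
      = (jacobiRHS - ∑ m ∈ Icc (0:ℤ) (2*((2*n+2:ℕ):ℤ)), wt (m - ((2*n+2:ℕ):ℤ)))
        - (Rsum (2*n+2) * Ev (2*n+2)
            - ∑ m ∈ Icc (0:ℤ) (2*((2*n+2:ℕ):ℤ)), wt (m - ((2*n+2:ℕ):ℤ))) := by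
    rw [jtp]; ring
  rw [he]
  exact dvd_sub h1 h2

lemma key2 (n : ℕ) :
    (X:PowerSeries ℤ)^(n+1) ∣ AA (2*(2*n+2)) - jacobiRHS * BB (2*(2*n+2)) := by
  set M : ℕ := 2*n+2 with hM
  have hEv2M : Ev (2*M) = Ev M * Mid M M := by
    rw [show 2*M = M+M by ring, Ev_add]
  have hprod : (AA (2*M) - jacobiRHS * BB (2*M)) * AA (2*M)
      = Ev M * ((Od M^2 * Ev M - jacobiRHS) - jacobiRHS * (Mid M M - 1)) := by
    calc (AA (2*M) - jacobiRHS * BB (2*M)) * AA (2*M)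
        = AA (2*M) * AA (2*M) - jacobiRHS * (AA (2*M) * BB (2*M)) := by ring
      _ = (Od M * Ev M) * (Od M * Ev M) - jacobiRHS * (Ev M * Mid M M) := by
          rw [AA_mul_BB, AA_split, hEv2M]
      _ = Ev M * ((Od M^2 * Ev M - jacobiRHS) - jacobiRHS * (Mid M M - 1)) := by ring
  have hd1 : (X:PowerSeries ℤ)^(n+1) ∣ Od M^2 * Ev M - jacobiRHS := by
    have h := dvd_neg.mpr (key1 n)
    rwa [neg_sub] at h
  have hd2 : (X:PowerSeries ℤ)^(n+1) ∣ jacobiRHS * (Mid M M - 1) :=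
    Dvd.dvd.mul_left
      ((pow_dvd_pow X (by omega : n+1 ≤ 2*M+2)).trans (X_pow_dvd_Mid_sub_one M M)) _
  refine dvd_of_dvd_mul_unit (u := AA (2*M)) (isUnit_of_cc _ (cc_AA (2*M))) ?_
  rw [hprod]
  exact (dvd_sub hd1 hd2).mul_left _

lemma main_dvd (n N : ℕ) (h : n ≤ N) :
    (X:PowerSeries ℤ)^(n+1) ∣ AA N - jacobiRHS * BB N := by
  set L : ℕ := 2*(2*n+2) with hL
  have hKey := key2 n
  rcases le_total N L with hc | hc
  · have hA : (X:PowerSeries ℤ)^(n+1) ∣ AA L - AA N := by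
      have := AA_diff (n+1) N (L-N) (by omega)
      rwa [show N+(L-N) = L by omega] at this
    have hB : (X:PowerSeries ℤ)^(n+1) ∣ BB L - BB N := by
      have := BB_diff (n+1) N (L-N) (by omega)
      rwa [show N+(L-N) = L by omega] at this
    have he : AA N - jacobiRHS * BB N
        = ((AA L - jacobiRHS * BB L) - (AA L - AA N)) + jacobiRHS * (BB L - BB N) := by
      ring
    rw [he]
    exact dvd_add (dvd_sub hKey hA) (hB.mul_left _)
  · have hA : (X:PowerSeries ℤ)^(n+1) ∣ AA N - AA L := by
      have := AA_diff (n+1) L (N-L) (by omega)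
      rwa [show L+(N-L) = N by omega] at this
    have hB : (X:PowerSeries ℤ)^(n+1) ∣ BB N - BB L := by
      have := BB_diff (n+1) L (N-L) (by omega)
      rwa [show L+(N-L) = N by omega] at this
    have he : AA N - jacobiRHS * BB N
        = ((AA L - jacobiRHS * BB L) + (AA N - AA L)) - jacobiRHS * (BB N - BB L) := by
      ring
    rw [he]
    exact dvd_sub (dvd_add hKey hA) (hB.mul_left _)


end JTPaux
end JTP

open Finset in
open JTPaux in
/-- `Π_{i≥1} (1−q^i)/(1+q^i) = Σ_{i∈ℤ} (−q)^{i²} = 1 + 2 Σ_{i≥1} (−1)^i q^{i²}`: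
the infinite product is understood coefficientwise, each coefficient of the
partial products being eventually constant (stable as soon as `n ≤ N`). -/
theorem stmt8 :
    ∀ n N : ℕ, n ≤ N →
      (PowerSeries.coeff (R := ℤ) n) (∏ j ∈ Finset.range N, jacobiFactor j)
        = (PowerSeries.coeff (R := ℤ) n) jacobiRHS := by
  intro n N h
  have hPB : (∏ j ∈ Finset.range N, jacobiFactor j) * BB N = AA N := by
    rw [BB, AA, ← Finset.prod_mul_distrib]
    refine Finset.prod_congr rfl fun j _ => ?_
    rw [jacobiFactor, mul_assoc, mul_comm (invOfUnit _ _),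
      mul_inv_of_cc _ (by simp [map_add, map_pow] : constantCoeff (R := ℤ) (1 + X^(j+1)) = 1),
      mul_one]
  have hdvd := main_dvd n N h
  rw [← hPB] at hdvd
  have hdvd2 : (X:PowerSeries ℤ)^(n+1)
      ∣ ((∏ j ∈ Finset.range N, jacobiFactor j) - jacobiRHS) * BB N := by
    rw [sub_mul]; exact hdvd
  have hdvd3 := dvd_of_dvd_mul_unit (isUnit_of_cc _ (cc_BB N)) hdvd2
  have h0 := (PowerSeries.X_pow_dvd_iff.mp hdvd3) n (by omega)
  rw [map_sub, sub_eq_zero] at h0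
  exact h0
end

section
/- Lagrange inversion instance: if u = z/(1+z)^2 as formal power series (so z is the compositional inverse of u), then the coefficient of u^n in z^k equals (k/n)·C(2n, n−k) for n ≥ k ≥ 1. -/
open PowerSeries Finset

private noncomputable def uu : PowerSeries ℚ :=
  PowerSeries.X * ((1 + PowerSeries.X : PowerSeries ℚ) ^ 2)⁻¹

private lemma constCoeff_A : constantCoeff (R := ℚ) ((1 + PowerSeries.X : PowerSeries ℚ) ^ 2) = 1 := by
  simp

private lemma coeff_pow_zero_of_lt {f : PowerSeries ℚ} (hf : constantCoeff (R := ℚ) f = 0)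
    {m j : ℕ} (h : m < j) : coeff (R := ℚ) m (f ^ j) = 0 := by
  have hdvd : (PowerSeries.X : PowerSeries ℚ) ^ j ∣ f ^ j :=
    pow_dvd_pow_of_dvd (PowerSeries.X_dvd_iff.mpr hf) j
  exact PowerSeries.X_pow_dvd_iff.mp hdvd m h

private lemma uu_const : constantCoeff (R := ℚ) uu = 0 := by
  simp [uu]

private lemma coeff_uu_pow_zero {m j : ℕ} (h : m < j) : coeff (R := ℚ) m (uu ^ j) = 0 :=
  coeff_pow_zero_of_lt uu_const h

private lemma coeff_uu_pow_self (m : ℕ) : coeff (R := ℚ) m (uu ^ m) = 1 := by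
  rw [uu, mul_pow]
  have h := PowerSeries.coeff_X_pow_mul
    ((((1 + PowerSeries.X : PowerSeries ℚ) ^ 2)⁻¹) ^ m) m 0
  rw [zero_add] at h
  rw [h, PowerSeries.coeff_zero_eq_constantCoeff, map_pow, PowerSeries.constantCoeff_inv,
    constCoeff_A]
  simp

/-- Composition with `uu`, defined coefficientwise. -/
private noncomputable def cmpu (f : PowerSeries ℚ) : PowerSeries ℚ :=
  PowerSeries.mk fun m => ∑ n ∈ Finset.range (m + 1), coeff (R := ℚ) n f * coeff (R := ℚ) m (uu ^ n)

private lemma coeff_eval2 (P : Polynomial ℚ) (m : ℕ) :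
    coeff (R := ℚ) m (P.eval₂ (PowerSeries.C (R := ℚ)) uu)
      = ∑ i ∈ Finset.range (m + 1), P.coeff i * coeff (R := ℚ) m (uu ^ i) := by
  set N := max (P.natDegree + 1) (m + 1) with hN
  have hdeg : P.natDegree < N := lt_of_lt_of_le (Nat.lt_succ_self _) (le_max_left _ _)
  rw [Polynomial.eval₂_eq_sum_range' (PowerSeries.C (R := ℚ)) hdeg uu, map_sum]
  have h1 : ∀ i ∈ Finset.range N,
      coeff (R := ℚ) m (PowerSeries.C (R := ℚ) (P.coeff i) * uu ^ i) = P.coeff i * coeff (R := ℚ) m (uu ^ i) := by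
    intro i _; rw [PowerSeries.coeff_C_mul]
  rw [Finset.sum_congr rfl h1]
  symm
  apply Finset.sum_subset
  · exact Finset.range_subset_range.mpr (le_max_right _ _)
  · intro i _ hi
    rw [Finset.mem_range, not_lt] at hi
    rw [coeff_uu_pow_zero (by omega), mul_zero]

private lemma coeff_cmpu (f : PowerSeries ℚ) (m : ℕ) :
    coeff (R := ℚ) m (cmpu f) = ∑ i ∈ Finset.range (m + 1), coeff (R := ℚ) i f * coeff (R := ℚ) m (uu ^ i) := by
  rw [cmpu, PowerSeries.coeff_mk]

private lemma coeff_cmpu_trunc (f : PowerSeries ℚ) {N m : ℕ} (h : m < N) :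
    coeff (R := ℚ) m (cmpu f) = coeff (R := ℚ) m ((PowerSeries.trunc N f).eval₂ (PowerSeries.C (R := ℚ)) uu) := by
  rw [coeff_eval2, coeff_cmpu]
  apply Finset.sum_congr rfl
  intro i hi
  rw [Finset.mem_range] at hi
  rw [PowerSeries.coeff_trunc, if_pos (by omega)]

private lemma cmpu_coe (P : Polynomial ℚ) (m : ℕ) :
    coeff (R := ℚ) m (cmpu (P : PowerSeries ℚ)) = coeff (R := ℚ) m (P.eval₂ (PowerSeries.C (R := ℚ)) uu) := by
  rw [coeff_eval2, coeff_cmpu]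
  apply Finset.sum_congr rfl
  intro i _
  rw [Polynomial.coeff_coe]

private lemma cmpu_mul (f g : PowerSeries ℚ) : cmpu (f * g) = cmpu f * cmpu g := by
  ext m
  set N := m + 1 with hN
  have h1 : coeff (R := ℚ) m (cmpu (f * g))
      = coeff (R := ℚ) m (cmpu ((PowerSeries.trunc N f : PowerSeries ℚ) * (PowerSeries.trunc N g))) := by
    rw [coeff_cmpu_trunc _ (Nat.lt_succ_self m), coeff_cmpu_trunc _ (Nat.lt_succ_self m),
      PowerSeries.trunc_trunc_mul_trunc]
  rw [h1, ← Polynomial.coe_mul, cmpu_coe, Polynomial.eval₂_mul, PowerSeries.coeff_mul,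
    PowerSeries.coeff_mul]
  apply Finset.sum_congr rfl
  intro p hp
  rw [Finset.HasAntidiagonal.mem_antidiagonal] at hp
  rw [coeff_cmpu_trunc f (show p.1 < N by omega), coeff_cmpu_trunc g (show p.2 < N by omega)]

private lemma cmpu_add (f g : PowerSeries ℚ) : cmpu (f + g) = cmpu f + cmpu g := by
  ext m
  rw [map_add, coeff_cmpu, coeff_cmpu, coeff_cmpu, ← Finset.sum_add_distrib]
  apply Finset.sum_congr rfl
  intro i _
  rw [map_add, add_mul]

private lemma cmpu_one : cmpu (1 : PowerSeries ℚ) = 1 := by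
  ext m
  rw [coeff_cmpu]
  have h : ∀ i ∈ Finset.range (m + 1),
      coeff (R := ℚ) i (1 : PowerSeries ℚ) * coeff (R := ℚ) m (uu ^ i)
        = if i = 0 then coeff (R := ℚ) m (uu ^ 0) else 0 := by
    intro i _
    rw [PowerSeries.coeff_one]
    split <;> simp_all
  rw [Finset.sum_congr rfl h, Finset.sum_ite_eq' (Finset.range (m + 1)) 0
    (fun _ => coeff (R := ℚ) m (uu ^ 0))]
  rw [if_pos (Finset.mem_range.mpr (by omega)), pow_zero]

private lemma cmpu_X : cmpu (PowerSeries.X : PowerSeries ℚ) = uu := by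
  ext m
  rw [coeff_cmpu]
  have h : ∀ i ∈ Finset.range (m + 1),
      coeff (R := ℚ) i (PowerSeries.X : PowerSeries ℚ) * coeff (R := ℚ) m (uu ^ i)
        = if i = 1 then coeff (R := ℚ) m (uu ^ 1) else 0 := by
    intro i _
    rw [PowerSeries.coeff_X]
    split <;> simp_all
  rw [Finset.sum_congr rfl h, Finset.sum_ite_eq' (Finset.range (m + 1)) 1
    (fun _ => coeff (R := ℚ) m (uu ^ 1))]
  by_cases hm : 1 ∈ Finset.range (m + 1)
  · rw [if_pos hm, pow_one]
  · rw [if_neg hm]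
    have h0 : m = 0 := by
      rw [Finset.mem_range] at hm; omega
    subst h0
    rw [PowerSeries.coeff_zero_eq_constantCoeff, uu_const]

private lemma cmpu_sq (f : PowerSeries ℚ) : cmpu (f ^ 2) = cmpu f ^ 2 := by
  rw [pow_two, cmpu_mul, ← pow_two]

/-- The Catalan power series. -/
private noncomputable def CC : PowerSeries ℚ := PowerSeries.mk fun n => (catalan n : ℚ)

private lemma CC_def : CC = PowerSeries.mk fun n => (catalan n : ℚ) := rfl

private lemma CC_eq : CC = 1 + PowerSeries.X * CC ^ 2 := by
  ext m
  cases m with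
  | zero => simp [CC_def]
  | succ e =>
    rw [map_add, PowerSeries.coeff_one, if_neg (Nat.succ_ne_zero e),
      PowerSeries.coeff_succ_X_mul, pow_two, PowerSeries.coeff_mul]
    rw [CC_def]
    simp only [PowerSeries.coeff_mk]
    rw [catalan_succ' e]
    push_cast
    ring

private noncomputable def WC : PowerSeries ℚ := CC - 1

private lemma WC_def : WC = CC - 1 := rfl

private lemma WC_const : constantCoeff (R := ℚ) WC = 0 := by
  rw [WC_def, map_sub, map_one]
  have h : constantCoeff (R := ℚ) CC = 1 := by
    rw [← PowerSeries.coeff_zero_eq_constantCoeff, CC_def, PowerSeries.coeff_mk]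
    simp
  rw [h]; ring

private lemma WC_eq : WC = PowerSeries.X * (1 + WC) ^ 2 := by
  have h1 : (1 : PowerSeries ℚ) + WC = CC := by rw [WC_def]; ring
  rw [h1, WC_def]
  nth_rewrite 1 [CC_eq]
  ring

private lemma X_fix : uu * (1 + PowerSeries.X) ^ 2 = (PowerSeries.X : PowerSeries ℚ) := by
  rw [uu, mul_assoc, PowerSeries.inv_mul_cancel _ (by rw [constCoeff_A]; norm_num), mul_one]

private lemma eq_zero_of_eq_X_mul (d e : PowerSeries ℚ) (h : d = PowerSeries.X * (e * d)) :
    d = 0 := by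
  ext m
  induction m using Nat.strong_induction_on with
  | _ m ih =>
    cases m with
    | zero =>
      rw [h, map_zero, PowerSeries.coeff_zero_eq_constantCoeff, map_mul,
        PowerSeries.constantCoeff_X, zero_mul]
    | succ p =>
      rw [h, PowerSeries.coeff_succ_X_mul, PowerSeries.coeff_mul, map_zero]
      apply Finset.sum_eq_zero
      intro q hq
      rw [Finset.HasAntidiagonal.mem_antidiagonal] at hq
      rw [ih q.2 (by omega), map_zero, mul_zero]

private lemma fix_unique (g h : PowerSeries ℚ) (hg : g = uu * (1 + g) ^ 2)
    (hh : h = uu * (1 + h) ^ 2) : g = h := by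
  have key : g - h = PowerSeries.X *
      ((((1 + PowerSeries.X : PowerSeries ℚ) ^ 2)⁻¹ * (2 + g + h)) * (g - h)) := by
    nth_rewrite 1 [hg]; nth_rewrite 1 [hh]
    rw [uu]; ring
  have h0 := eq_zero_of_eq_X_mul (g - h) _ key
  linear_combination h0

private lemma cmpu_WC : cmpu WC = PowerSeries.X := by
  have h1 : cmpu WC = uu * (1 + cmpu WC) ^ 2 := by
    nth_rewrite 1 [WC_eq]
    rw [cmpu_mul, cmpu_X, cmpu_sq, cmpu_add, cmpu_one]
  exact fix_unique _ _ h1 X_fix.symm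

/-- Main coefficient computation from the functional equation. -/
private lemma coeff_pow_formula (w : PowerSeries ℚ) (hw0 : constantCoeff (R := ℚ) w = 0)
    (hfe : w = PowerSeries.X * (1 + w) ^ 2) :
    ∀ n k : ℕ, 1 ≤ k → k ≤ n →
      coeff (R := ℚ) n (w ^ k) = ((k : ℚ) / n) * ((2 * n).choose (n - k) : ℚ) := by
  intro n
  induction n using Nat.strong_induction_on with
  | _ n ih =>
    intro k hk hkn
    set m := n - k with hm
    have hn : n = m + k := by omega
    have hstep : coeff (R := ℚ) n (w ^ k) = coeff (R := ℚ) m ((1 + w) ^ (2 * k)) := by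
      nth_rewrite 1 [hfe]
      rw [mul_pow, ← pow_mul, hn, PowerSeries.coeff_X_pow_mul]
    have hexp : coeff (R := ℚ) m ((1 + w) ^ (2 * k))
        = ∑ j ∈ Finset.range (2 * k + 1), coeff (R := ℚ) m (w ^ j) * ((2 * k).choose j : ℚ) := by
      rw [add_comm (1 : PowerSeries ℚ) w, add_pow, map_sum]
      apply Finset.sum_congr rfl
      intro j _
      rw [one_pow, mul_one, ← map_natCast (PowerSeries.C (R := ℚ)) ((2 * k).choose j),
        PowerSeries.coeff_mul_C]
    rw [hstep, hexp]
    have hk0 : (k : ℚ) ≠ 0 := by exact_mod_cast (by omega : k ≠ 0)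
    rcases Nat.eq_zero_or_pos m with hm0 | hmpos
    · -- case n = k
      have hnk : n = k := by omega
      have hz : ∀ j ∈ Finset.range (2 * k + 1), j ≠ 0 →
          coeff (R := ℚ) m (w ^ j) * ((2 * k).choose j : ℚ) = 0 := by
        intro j _ hj
        rw [hm0, PowerSeries.coeff_zero_eq_constantCoeff, map_pow, hw0, zero_pow hj, zero_mul]
      rw [Finset.sum_eq_single_of_mem 0 (Finset.mem_range.mpr (by omega)) hz, pow_zero, hm0,
        PowerSeries.coeff_zero_eq_constantCoeff, map_one, hnk, Nat.choose_zero_right,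
        div_self hk0]
    · -- case m ≥ 1
      have hm0' : (m : ℚ) ≠ 0 := by exact_mod_cast (by omega : m ≠ 0)
      have hn0 : (n : ℚ) ≠ 0 := by exact_mod_cast (by omega : n ≠ 0)
      have hterm : ∀ j : ℕ, (m : ℚ) * coeff (R := ℚ) m (w ^ j)
          = ((j * (2 * m).choose (m + j) : ℕ) : ℚ) := by
        intro j
        rcases Nat.eq_zero_or_pos j with hj0 | hjpos
        · subst hj0
          rw [pow_zero, PowerSeries.coeff_one, if_neg (by omega)]
          simp
        · rcases le_or_gt j m with hjm | hjm
          · have hmn : m < n := by omega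
            rw [ih m hmn j hjpos (by omega)]
            have hmj : m - j = m - j := rfl
            have hsymm : (2 * m).choose (m + j) = (2 * m).choose (m - j) := by
              rw [← Nat.choose_symm (by omega : m + j ≤ 2 * m)]
              congr 1
              omega
            rw [hsymm]
            push_cast
            field_simp
          · rw [coeff_pow_zero_of_lt hw0 hjm,
              Nat.choose_eq_zero_of_lt (by omega : 2 * m < m + j)]
            simp
      set S : ℕ := ∑ j ∈ Finset.range (2 * k + 1),
          j * (2 * m).choose (m + j) * (2 * k).choose j with hS
      have hsum : (m : ℚ) * ∑ j ∈ Finset.range (2 * k + 1),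
          coeff (R := ℚ) m (w ^ j) * ((2 * k).choose j : ℚ) = (S : ℚ) := by
        rw [Finset.mul_sum, hS]
        push_cast
        apply Finset.sum_congr rfl
        intro j _
        rw [← mul_assoc, hterm j]
        push_cast
        ring
      set T : ℕ := (2 * (m + k) - 1).choose (m - 1) with hT
      have hST : S = 2 * k * T := by
        rw [hS, Finset.sum_range_succ']
        have hzero : (0 : ℕ) * (2 * m).choose (m + 0) * (2 * k).choose 0 = 0 := by simp
        rw [hzero, add_zero]
        have h1 : ∀ i ∈ Finset.range (2 * k),
            (i + 1) * (2 * m).choose (m + (i + 1)) * (2 * k).choose (i + 1)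
              = 2 * k * ((2 * k - 1).choose i * (2 * m).choose (m + 1 + i)) := by
          intro i _
          have h2 : 2 * k * (2 * k - 1).choose i = (2 * k).choose (i + 1) * (i + 1) := by
            have h3 := Nat.add_one_mul_choose_eq (2 * k - 1) i
            rw [show 2 * k - 1 + 1 = 2 * k by omega] at h3
            simpa [Nat.succ_eq_add_one] using h3
          calc (i + 1) * (2 * m).choose (m + (i + 1)) * (2 * k).choose (i + 1)
              = ((2 * k).choose (i + 1) * (i + 1)) * (2 * m).choose (m + 1 + i) := by
                rw [show m + (i + 1) = m + 1 + i by omega]; ring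
            _ = (2 * k * (2 * k - 1).choose i) * (2 * m).choose (m + 1 + i) := by rw [h2]
            _ = 2 * k * ((2 * k - 1).choose i * (2 * m).choose (m + 1 + i)) := by ring
        rw [Finset.sum_congr rfl h1, ← Finset.mul_sum]
        congr 1
        have hext : ∑ i ∈ Finset.range (2 * k),
            (2 * k - 1).choose i * (2 * m).choose (m + 1 + i)
            = ∑ i ∈ Finset.range (2 * k + m),
              (2 * k - 1).choose i * (2 * m).choose (m + 1 + i) := by
          apply Finset.sum_subset (Finset.range_subset_range.mpr (by omega))
          intro i _ hi
          rw [Finset.mem_range, not_lt] at hi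
          rw [Nat.choose_eq_zero_of_lt (by omega : 2 * k - 1 < i), zero_mul]
        have htrunc : ∑ i ∈ Finset.range (2 * k + m),
            (2 * k - 1).choose i * (2 * m).choose (m + 1 + i)
            = ∑ i ∈ Finset.range m, (2 * k - 1).choose i * (2 * m).choose (m + 1 + i) := by
          symm
          apply Finset.sum_subset (Finset.range_subset_range.mpr (by omega))
          intro i _ hi
          rw [Finset.mem_range, not_lt] at hi
          rw [Nat.choose_eq_zero_of_lt (by omega : 2 * m < m + 1 + i), mul_zero]
        rw [hext, htrunc]
        have hsymm2 : ∀ i ∈ Finset.range m,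
            (2 * k - 1).choose i * (2 * m).choose (m + 1 + i)
              = (2 * k - 1).choose i * (2 * m).choose (m - 1 - i) := by
          intro i hi
          rw [Finset.mem_range] at hi
          congr 1
          rw [← Nat.choose_symm (by omega : m + 1 + i ≤ 2 * m)]
          congr 1
          omega
        rw [Finset.sum_congr rfl hsymm2, hT]
        have hvdm := Nat.add_choose_eq (2 * k - 1) (2 * m) (m - 1)
        rw [Finset.Nat.sum_antidiagonal_eq_sum_range_succ_mk] at hvdm
        rw [show 2 * (m + k) - 1 = 2 * k - 1 + 2 * m by omega, hvdm]
        exact Finset.sum_congr (by congr 1; omega) (fun i _ => rfl)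
      have hTn : 2 * (m + k) * T = (2 * (m + k)).choose m * m := by
        rw [hT]
        have h4 := Nat.add_one_mul_choose_eq (2 * (m + k) - 1) (m - 1)
        rw [show 2 * (m + k) - 1 + 1 = 2 * (m + k) by omega,
          show m - 1 + 1 = m by omega] at h4
        exact h4
      have hsum' : (∑ j ∈ Finset.range (2 * k + 1),
          coeff (R := ℚ) m (w ^ j) * ((2 * k).choose j : ℚ)) = (S : ℚ) / m := by
        rw [eq_div_iff hm0']
        linear_combination hsum
      rw [hsum']
      have hq1 : (S : ℚ) = 2 * k * T := by rw [hST]; push_cast; ring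
      have hq2 : 2 * (n : ℚ) * T = ((2 * n).choose m : ℚ) * m := by
        have h5 := hTn
        rw [← hn] at h5
        exact_mod_cast h5
      rw [hq1]
      field_simp
      linear_combination hq2

/-- Lagrange inversion instance: let `u = z/(1+z)²` in `ℚ⟦z⟧` and let `w = z(u)` be
the compositional inverse of `u` (i.e. `w` has zero constant term and
`w(u(z)) = z`, the substitution being expressed coefficientwise, which is
legitimate since `u` has order `1`).  Then for `1 ≤ k ≤ n`, the coefficient of
`uⁿ` in `z(u)^k`, i.e. the `n`-th coefficient of `w^k`, is `(k/n)·C(2n, n−k)`. -/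
theorem stmt19 (w : PowerSeries ℚ)
    (hw0 : PowerSeries.constantCoeff (R := ℚ) w = 0)
    (hw : ∀ m : ℕ,
      (PowerSeries.coeff (R := ℚ) m) (PowerSeries.X : PowerSeries ℚ)
        = ∑ n ∈ Finset.range (m + 1),
            (PowerSeries.coeff (R := ℚ) n) w *
              (PowerSeries.coeff (R := ℚ) m)
                ((PowerSeries.X * ((1 + PowerSeries.X : PowerSeries ℚ) ^ 2)⁻¹) ^ n))
    (n k : ℕ) (hk : 1 ≤ k) (hkn : k ≤ n) :
    (PowerSeries.coeff (R := ℚ) n) (w ^ k)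
      = ((k : ℚ) / n) * ((2 * n).choose (n - k) : ℚ) := by
  have hwW : w = WC := by
    ext m
    induction m using Nat.strong_induction_on with
    | _ m ih =>
      have h1 := hw m
      have h2 : coeff (R := ℚ) m (PowerSeries.X : PowerSeries ℚ)
          = ∑ i ∈ Finset.range (m + 1), coeff (R := ℚ) i WC * coeff (R := ℚ) m (uu ^ i) := by
        rw [← coeff_cmpu, cmpu_WC]
      rw [show (PowerSeries.X * ((1 + PowerSeries.X : PowerSeries ℚ) ^ 2)⁻¹) = uu from rfl] at h1
      rw [h1] at h2
      rw [Finset.sum_range_succ, Finset.sum_range_succ] at h2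
      have hcongr : ∑ i ∈ Finset.range m, coeff (R := ℚ) i w * coeff (R := ℚ) m (uu ^ i)
          = ∑ i ∈ Finset.range m, coeff (R := ℚ) i WC * coeff (R := ℚ) m (uu ^ i) := by
        apply Finset.sum_congr rfl
        intro i hi
        rw [Finset.mem_range] at hi
        rw [ih i (by omega)]
      rw [hcongr] at h2
      have h3 : coeff (R := ℚ) m w * coeff (R := ℚ) m (uu ^ m) = coeff (R := ℚ) m WC * coeff (R := ℚ) m (uu ^ m) := by
        linarith [h2]
      rw [coeff_uu_pow_self, mul_one, mul_one] at h3
      exact h3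
  have hfe : w = PowerSeries.X * (1 + w) ^ 2 := by
    rw [hwW]; exact WC_eq
  exact coeff_pow_formula w hw0 hfe n k hk hkn
end
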